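/- arXiv:2305.00796 — 4 statements merged into one kernel-verified Lean document; each statement's English description precedes it below -/
import Mathlib

section
/- Let S be a non-empty set of prime numbers. Then every breakpoint of every element of H(ℝ) whose pieces have matrices in SL₂(ℤ[1/S]) is a fixed point in ℝ of a hyperbolic element of SL₂(ℤ[1/S]). Consequently, the group Γ_S of piecewise-SL₂(ℤ[1/S]) homeomorphisms of the line coincides with the group H(ℤ[1/S]). -/
open Matrix Filter Topology MeasureTheory

noncomputable section

/-- The group of homeomorphisms of a topological space, under composition. -/
instance Homeomorph.instGroup' {X : Type*} [TopologicalSpace X] : Group (X ≃ₜ X) where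
  mul a b := b.trans a
  one := Homeomorph.refl X
  inv := Homeomorph.symm
  mul_assoc a b c := Homeomorph.ext fun _ => rfl
  one_mul a := Homeomorph.ext fun _ => rfl
  mul_one a := Homeomorph.ext fun _ => rfl
  inv_mul_cancel a := Homeomorph.ext fun x => a.symm_apply_apply x

@[simp] lemma Homeomorph.mul_apply' {X : Type*} [TopologicalSpace X]
    (a b : X ≃ₜ X) (x : X) : (a * b) x = a (b x) := rfl

@[simp] lemma Homeomorph.inv_coe {X : Type*} [TopologicalSpace X]
    (a : X ≃ₜ X) : (a⁻¹ : X ≃ₜ X) = a.symm := rfl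

abbrev SL2 (R : Type*) [CommRing R] := Matrix.SpecialLinearGroup (Fin 2) R

namespace PP

/-- Denominator of the Möbius transformation attached to `g`. -/
def mdenom (g : SL2 ℝ) (x : ℝ) : ℝ := g.1 1 0 * x + g.1 1 1

/-- The Möbius transformation attached to `g`. -/
def moebius (g : SL2 ℝ) (x : ℝ) : ℝ := (g.1 0 0 * x + g.1 0 1) / (g.1 1 0 * x + g.1 1 1)

/-- `g` is a local (projective) piece of the homeomorphism `h` at the point `x`. -/
def IsLocalPiece (h : ℝ ≃ₜ ℝ) (g : SL2 ℝ) (x : ℝ) : Prop :=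
  mdenom g x ≠ 0 ∧ ∀ᶠ y in 𝓝 x, h y = moebius g y

/-- `h` is piecewise given by Möbius transformations of matrices in `M`:
outside of a finite set of breakpoints, `h` is locally a Möbius map from `M`. -/
def IsPiecewiseIn (M : Set (SL2 ℝ)) (h : ℝ ≃ₜ ℝ) : Prop :=
  ∃ B : Finset ℝ, ∀ x ∉ B, ∃ g ∈ M, IsLocalPiece h g x

/-- A breakpoint of `h` : a point where `h` is not locally projective. -/
def IsBreakpoint (h : ℝ ≃ₜ ℝ) (x : ℝ) : Prop := ¬ ∃ g : SL2 ℝ, IsLocalPiece h g x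

/-- Matrices with entries in the subring `A`. -/
def entriesIn (A : Subring ℝ) : Set (SL2 ℝ) := {g | ∀ i j, g.1 i j ∈ A}

lemma one_entriesIn (A : Subring ℝ) : (1 : SL2 ℝ) ∈ entriesIn A := by
  intro i j
  by_cases h : i = j <;>
    simp [entriesIn, Matrix.SpecialLinearGroup.coe_one, Matrix.one_apply, h, A.one_mem, A.zero_mem]

lemma mul_entriesIn {A : Subring ℝ} {g₁ g₂ : SL2 ℝ} (h₁ : g₁ ∈ entriesIn A)
    (h₂ : g₂ ∈ entriesIn A) : g₁ * g₂ ∈ entriesIn A := by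
  intro i j
  rw [Matrix.SpecialLinearGroup.coe_mul, Matrix.mul_apply]
  exact Subring.sum_mem A fun k _ => A.mul_mem (h₁ i k) (h₂ k j)

lemma inv_entriesIn {A : Subring ℝ} {g : SL2 ℝ} (h : g ∈ entriesIn A) :
    g⁻¹ ∈ entriesIn A := by
  intro i j
  have : (g⁻¹ : SL2 ℝ).1 = (g.1).adjugate := Matrix.SpecialLinearGroup.coe_inv g
  rw [this, Matrix.adjugate_fin_two]
  fin_cases i <;> fin_cases j <;>
    simp [Matrix.cons_val_zero, Matrix.cons_val_one] <;>
    first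
      | exact h 1 1
      | exact h 0 1
      | exact h 1 0
      | exact A.neg_mem (h 0 1)
      | exact A.neg_mem (h 1 0)
      | exact h 0 0

lemma det_eq (g : SL2 ℝ) : g.1 0 0 * g.1 1 1 - g.1 0 1 * g.1 1 0 = 1 := by
  have := g.2
  rwa [Matrix.det_fin_two] at this

/-- Composition of Möbius transformations (denominator part). -/
lemma mdenom_mul (g₁ g₂ : SL2 ℝ) (x : ℝ) (h₂ : mdenom g₂ x ≠ 0) :
    mdenom (g₁ * g₂) x = mdenom g₁ (moebius g₂ x) * mdenom g₂ x := by
  unfold mdenom moebius at *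
  rw [Matrix.SpecialLinearGroup.coe_mul, Matrix.mul_apply, Matrix.mul_apply, Fin.sum_univ_two,
    Fin.sum_univ_two]
  field_simp
  ring

lemma mdenom_mul_ne (g₁ g₂ : SL2 ℝ) (x : ℝ) (h₂ : mdenom g₂ x ≠ 0)
    (h₁ : mdenom g₁ (moebius g₂ x) ≠ 0) : mdenom (g₁ * g₂) x ≠ 0 := by
  rw [mdenom_mul g₁ g₂ x h₂]; exact mul_ne_zero h₁ h₂

lemma moebius_mul (g₁ g₂ : SL2 ℝ) (x : ℝ) (h₂ : mdenom g₂ x ≠ 0)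
    (h₁ : mdenom g₁ (moebius g₂ x) ≠ 0) :
    moebius (g₁ * g₂) x = moebius g₁ (moebius g₂ x) := by
  have hden := mdenom_mul_ne g₁ g₂ x h₂ h₁
  unfold mdenom moebius at *
  simp only [Matrix.SpecialLinearGroup.coe_mul, Matrix.mul_apply, Fin.sum_univ_two] at *
  rw [div_eq_div_iff hden h₁]
  field_simp
  ring

lemma inv_entry_00 (g : SL2 ℝ) : (g⁻¹ : SL2 ℝ).1 0 0 = g.1 1 1 := by
  simp [Matrix.SpecialLinearGroup.coe_inv, Matrix.adjugate_fin_two]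
lemma inv_entry_01 (g : SL2 ℝ) : (g⁻¹ : SL2 ℝ).1 0 1 = -g.1 0 1 := by
  simp [Matrix.SpecialLinearGroup.coe_inv, Matrix.adjugate_fin_two]
lemma inv_entry_10 (g : SL2 ℝ) : (g⁻¹ : SL2 ℝ).1 1 0 = -g.1 1 0 := by
  simp [Matrix.SpecialLinearGroup.coe_inv, Matrix.adjugate_fin_two]
lemma inv_entry_11 (g : SL2 ℝ) : (g⁻¹ : SL2 ℝ).1 1 1 = g.1 0 0 := by
  simp [Matrix.SpecialLinearGroup.coe_inv, Matrix.adjugate_fin_two]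

lemma moebius_one (x : ℝ) : moebius 1 x = x := by
  unfold moebius
  simp [Matrix.SpecialLinearGroup.coe_one, Matrix.one_apply]

lemma mdenom_one (x : ℝ) : mdenom 1 x = 1 := by
  unfold mdenom
  simp [Matrix.SpecialLinearGroup.coe_one, Matrix.one_apply]

lemma mdenom_inv (g : SL2 ℝ) (x : ℝ) (h : mdenom g x ≠ 0) :
    mdenom g⁻¹ (moebius g x) = 1 / mdenom g x := by
  have hdet := det_eq g
  unfold mdenom moebius at *
  rw [inv_entry_10, inv_entry_11]
  field_simp
  linear_combination hdet

lemma moebius_inv (g : SL2 ℝ) (x : ℝ) (h : mdenom g x ≠ 0) :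
    mdenom g⁻¹ (moebius g x) ≠ 0 ∧ moebius g⁻¹ (moebius g x) = x := by
  have h1 : mdenom g⁻¹ (moebius g x) = 1 / mdenom g x := mdenom_inv g x h
  have hne : mdenom g⁻¹ (moebius g x) ≠ 0 := by rw [h1]; exact one_div_ne_zero h
  refine ⟨hne, ?_⟩
  rw [← moebius_mul g⁻¹ g x h hne, inv_mul_cancel, moebius_one]

lemma mdenom_continuous (g : SL2 ℝ) : Continuous (mdenom g) := by
  unfold mdenom; fun_prop

lemma eventually_mdenom_ne (g : SL2 ℝ) {x : ℝ} (h : mdenom g x ≠ 0) :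
    ∀ᶠ y in 𝓝 x, mdenom g y ≠ 0 :=
  (mdenom_continuous g).continuousAt.eventually_ne h

lemma IsLocalPiece.mul {a b : ℝ ≃ₜ ℝ} {g₁ g₂ : SL2 ℝ} {x : ℝ}
    (h₁ : IsLocalPiece a g₁ (b x)) (h₂ : IsLocalPiece b g₂ x) :
    IsLocalPiece (a * b) (g₁ * g₂) x := by
  obtain ⟨d₂, e₂⟩ := h₂
  obtain ⟨d₁, e₁⟩ := h₁
  have hbx : b x = moebius g₂ x := e₂.self_of_nhds
  have d₁' : mdenom g₁ (moebius g₂ x) ≠ 0 := hbx ▸ d₁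
  refine ⟨mdenom_mul_ne g₁ g₂ x d₂ d₁', ?_⟩
  have hmap : ∀ᶠ y in 𝓝 x, a (b y) = moebius g₁ (b y) := by
    have hb : Filter.map b (𝓝 x) = 𝓝 (b x) := b.map_nhds_eq x
    rw [← hb] at e₁
    exact e₁
  have hd1ev : ∀ᶠ y in 𝓝 x, mdenom g₁ (b y) ≠ 0 := by
    have hb : Filter.map b (𝓝 x) = 𝓝 (b x) := b.map_nhds_eq x
    have := eventually_mdenom_ne g₁ d₁
    rw [← hb] at this
    exact this
  filter_upwards [e₂, hmap, hd1ev, eventually_mdenom_ne g₂ d₂] with y hy₂ hy₁ hyd₁ hyd₂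
  have hyd₁' : mdenom g₁ (moebius g₂ y) ≠ 0 := by rw [← hy₂]; exact hyd₁
  calc (a * b) y = a (b y) := rfl
    _ = moebius g₁ (b y) := hy₁
    _ = moebius g₁ (moebius g₂ y) := by rw [hy₂]
    _ = moebius (g₁ * g₂) y := (moebius_mul g₁ g₂ y hyd₂ hyd₁').symm

lemma IsLocalPiece.inv {h : ℝ ≃ₜ ℝ} {g : SL2 ℝ} {x : ℝ} (hp : IsLocalPiece h g x) :
    IsLocalPiece h⁻¹ g⁻¹ (h x) := by
  obtain ⟨d, e⟩ := hp
  have hx : h x = moebius g x := e.self_of_nhds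
  refine ⟨by rw [hx]; exact (moebius_inv g x d).1, ?_⟩
  have hb : Filter.map h (𝓝 x) = 𝓝 (h x) := h.map_nhds_eq x
  rw [← hb, Filter.eventually_map]
  filter_upwards [e, eventually_mdenom_ne g d] with y hy hyd
  calc (h⁻¹ : ℝ ≃ₜ ℝ) (h y) = y := h.symm_apply_apply y
    _ = moebius g⁻¹ (h y) := by rw [hy]; exact ((moebius_inv g y hyd).2).symm

lemma isLocalPiece_one (x : ℝ) : IsLocalPiece 1 1 x := by
  refine ⟨by rw [mdenom_one]; exact one_ne_zero, ?_⟩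
  filter_upwards with y
  rw [moebius_one]
  rfl

/-- The group of piecewise-`SL₂(A)` homeomorphisms of the real line. -/
def PW (A : Subring ℝ) : Subgroup (ℝ ≃ₜ ℝ) where
  carrier := {h | IsPiecewiseIn (entriesIn A) h}
  one_mem' := ⟨∅, fun x _ => ⟨1, one_entriesIn A, isLocalPiece_one x⟩⟩
  mul_mem' := by
    rintro a b ⟨Ba, hBa⟩ ⟨Bb, hBb⟩
    refine ⟨Bb ∪ Ba.image b.symm, fun x hx => ?_⟩
    rw [Finset.mem_union, not_or] at hx
    obtain ⟨hxb, hxa⟩ := hx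
    obtain ⟨g₂, hg₂A, hg₂⟩ := hBb x hxb
    have hbx : b x ∉ Ba := by
      intro hmem
      exact hxa (Finset.mem_image.2 ⟨b x, hmem, b.symm_apply_apply x⟩)
    obtain ⟨g₁, hg₁A, hg₁⟩ := hBa (b x) hbx
    exact ⟨g₁ * g₂, mul_entriesIn hg₁A hg₂A, hg₁.mul hg₂⟩
  inv_mem' := by
    rintro h ⟨B, hB⟩
    refine ⟨B.image h, fun y hy => ?_⟩
    have hxB : h.symm y ∉ B := by
      intro hmem
      exact hy (Finset.mem_image.2 ⟨h.symm y, hmem, h.apply_symm_apply y⟩)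
    obtain ⟨g, hgA, hg⟩ := hB (h.symm y) hxB
    have := hg.inv
    rw [h.apply_symm_apply y] at this
    exact ⟨g⁻¹, inv_entriesIn hgA, this⟩

/-- Real fixed points of hyperbolic elements of `SL₂(A)`. -/
def FixHyp (A : Subring ℝ) : Set ℝ :=
  {x | ∃ g : SL2 ℝ, g ∈ entriesIn A ∧ |Matrix.trace g.1| > 2 ∧
        mdenom g x ≠ 0 ∧ moebius g x = x}

lemma trace_conj (g q : SL2 ℝ) :
    Matrix.trace ((g⁻¹ * q * g : SL2 ℝ) : Matrix (Fin 2) (Fin 2) ℝ) = Matrix.trace q.1 := by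
  rw [Matrix.SpecialLinearGroup.coe_mul, Matrix.SpecialLinearGroup.coe_mul,
    Matrix.trace_mul_comm, ← Matrix.mul_assoc, ← Matrix.SpecialLinearGroup.coe_mul,
    mul_inv_cancel, Matrix.SpecialLinearGroup.coe_one, Matrix.one_mul]

lemma FixHyp.conj {A : Subring ℝ} {g : SL2 ℝ} {x : ℝ} (hgA : g ∈ entriesIn A)
    (hd : mdenom g x ≠ 0) (hfix : moebius g x ∈ FixHyp A) : x ∈ FixHyp A := by
  obtain ⟨q, hqA, hqtr, hqd, hqfix⟩ := hfix
  refine ⟨g⁻¹ * q * g, mul_entriesIn (mul_entriesIn (inv_entriesIn hgA) hqA) hgA,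
    by rw [trace_conj]; exact hqtr, ?_, ?_⟩
  all_goals
    have hden1 : mdenom (q * g) x ≠ 0 := mdenom_mul_ne q g x hd hqd
    have hmo1 : moebius (q * g) x = moebius g x := by
      rw [moebius_mul q g x hd hqd, hqfix]
    have hden2 : mdenom g⁻¹ (moebius (q * g) x) ≠ 0 := by
      rw [hmo1]; exact (moebius_inv g x hd).1
  · rw [mul_assoc]
    exact mdenom_mul_ne g⁻¹ (q * g) x hden1 hden2
  · rw [mul_assoc, moebius_mul g⁻¹ (q * g) x hden1 hden2, hmo1]
    exact (moebius_inv g x hd).2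

/-- `h` is locally an `SL₂(A)`-Möbius map away from the set `Φ`. -/
def LocallyIn (A : Subring ℝ) (Φ : Set ℝ) (h : ℝ ≃ₜ ℝ) : Prop :=
  ∀ x : ℝ, x ∉ Φ → ∃ g ∈ entriesIn A, IsLocalPiece h g x

/-- The complement of `Φ` is invariant under Möbius maps with entries in `A`. -/
def MoebiusInv (A : Subring ℝ) (Φ : Set ℝ) : Prop :=
  ∀ g ∈ entriesIn A, ∀ x : ℝ, mdenom g x ≠ 0 → x ∉ Φ → moebius g x ∉ Φ

lemma LocallyIn.mul {A : Subring ℝ} {Φ : Set ℝ} (hΦ : MoebiusInv A Φ) {a b : ℝ ≃ₜ ℝ}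
    (ha : LocallyIn A Φ a) (hb : LocallyIn A Φ b) : LocallyIn A Φ (a * b) := by
  intro x hx
  obtain ⟨g₂, hg₂A, hg₂⟩ := hb x hx
  have hbx : b x ∉ Φ := by
    have : b x = moebius g₂ x := hg₂.2.self_of_nhds
    rw [this]
    exact hΦ g₂ hg₂A x hg₂.1 hx
  obtain ⟨g₁, hg₁A, hg₁⟩ := ha (b x) hbx
  exact ⟨g₁ * g₂, mul_entriesIn hg₁A hg₂A, hg₁.mul hg₂⟩

/-- The group of piecewise-`SL₂(A)` homeomorphisms of the line all of whose
breakpoints lie in the set `Φ`. -/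
def BreakIn (A : Subring ℝ) (Φ : Set ℝ) (hΦ : MoebiusInv A Φ) : Subgroup (ℝ ≃ₜ ℝ) where
  carrier := {h | IsPiecewiseIn (entriesIn A) h ∧ LocallyIn A Φ h ∧ LocallyIn A Φ h⁻¹}
  one_mem' := by
    refine ⟨(PW A).one_mem', ?_, ?_⟩ <;>
      · intro x _
        exact ⟨1, one_entriesIn A, isLocalPiece_one x⟩
  mul_mem' := by
    rintro a b ⟨hapw, ha, ha'⟩ ⟨hbpw, hb, hb'⟩
    refine ⟨(PW A).mul_mem' hapw hbpw, LocallyIn.mul hΦ ha hb, ?_⟩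
    rw [_root_.mul_inv_rev]
    exact LocallyIn.mul hΦ hb' ha'
  inv_mem' := by
    rintro h ⟨hpw, h₁, h₂⟩
    refine ⟨(PW A).inv_mem' hpw, h₂, ?_⟩
    rw [inv_inv]
    exact h₁

lemma fixHyp_moebiusInv (A : Subring ℝ) : MoebiusInv A (FixHyp A) :=
  fun g hg x hd hx hmem => hx (FixHyp.conj hg hd hmem)

/-- The group `H(A)`: piecewise-`SL₂(A)` homeomorphisms of the line whose
breakpoints are fixed points of hyperbolic elements of `SL₂(A)`. -/
def HGroup (A : Subring ℝ) : Subgroup (ℝ ≃ₜ ℝ) := BreakIn A (FixHyp A) (fixHyp_moebiusInv A)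

/-- The ring `ℤ[1/S]` of `S`-integers, as a subring of `ℚ`. -/
def SIntQ (S : Set ℕ) : Subring ℚ := Subring.closure {x : ℚ | ∃ p ∈ S, x = (p : ℚ)⁻¹}

/-- The ring `ℤ[1/S]` of `S`-integers, as a subring of `ℝ`. -/
def SIntR (S : Set ℕ) : Subring ℝ := Subring.closure {x : ℝ | ∃ p ∈ S, x = (p : ℝ)⁻¹}

/-- The group `Γ_S` of piecewise-`SL₂(ℤ[1/S])` homeomorphisms of the line. -/
def Gamma (S : Set ℕ) : Subgroup (ℝ ≃ₜ ℝ) := PW (SIntR S)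

/-- `ℚ` as a subring of `ℝ`. -/
def ratSubring : Subring ℝ := (Rat.castHom ℝ).range

/-- `ℤ` as a subring of `ℝ`. -/
def intSubring : Subring ℝ := (Int.castRingHom ℝ).range

/-- The group `H(ℚ)` of piecewise-`SL₂(ℚ)` homeomorphisms of the line. -/
def HQ : Subgroup (ℝ ≃ₜ ℝ) := PW ratSubring

lemma ratSubring_div_mem {x y : ℝ} (hx : x ∈ ratSubring) (hy : y ∈ ratSubring) :
    x / y ∈ ratSubring := by
  obtain ⟨q, rfl⟩ := RingHom.mem_range.1 hx
  obtain ⟨r, rfl⟩ := RingHom.mem_range.1 hy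
  refine RingHom.mem_range.2 ⟨q / r, ?_⟩
  simp [Rat.cast_div]

lemma moebius_mem_rat {g : SL2 ℝ} (hg : g ∈ entriesIn ratSubring) {y : ℝ}
    (hy : y ∈ ratSubring) : moebius g y ∈ ratSubring := by
  unfold moebius
  exact ratSubring_div_mem
    (ratSubring.add_mem (ratSubring.mul_mem (hg 0 0) hy) (hg 0 1))
    (ratSubring.add_mem (ratSubring.mul_mem (hg 1 0) hy) (hg 1 1))

lemma rat_moebiusInv {A : Subring ℝ} (hA : A ≤ ratSubring) :
    MoebiusInv A (ratSubring : Set ℝ) := by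
  intro g hg x hd hx hmem
  apply hx
  have : moebius g⁻¹ (moebius g x) = x := (moebius_inv g x hd).2
  rw [← this]
  exact moebius_mem_rat (fun i j => hA (inv_entriesIn hg i j)) hmem

lemma intSubring_le_rat : intSubring ≤ ratSubring := by
  rintro x ⟨n, rfl⟩
  refine RingHom.mem_range.2 ⟨(n : ℚ), ?_⟩
  simp

/-- Thompson's group `F` realized as `H_ℚ(ℤ)`: piecewise-`SL₂(ℤ)` homeomorphisms
of the line with rational breakpoints. -/
def Thompson : Subgroup (ℝ ≃ₜ ℝ) :=
  BreakIn intSubring (ratSubring : Set ℝ) (rat_moebiusInv intSubring_le_rat)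

/-- The group `H_ℚ(ℚ)` of piecewise-`SL₂(ℚ)` homeomorphisms of the line with
rational breakpoints. -/
def HQrat : Subgroup (ℝ ≃ₜ ℝ) :=
  BreakIn ratSubring (ratSubring : Set ℝ) (rat_moebiusInv le_rfl)

/-- A bounded real-valued function. -/
def Bdd {X : Type*} (f : X → ℝ) : Prop := ∃ C, ∀ x, |f x| ≤ C

/-- A mean: a normalized positive linear functional on bounded functions. -/
structure MeanOn (X : Type*) where
  toFun : (X → ℝ) → ℝ
  add' : ∀ f g : X → ℝ, Bdd f → Bdd g → toFun (f + g) = toFun f + toFun g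
  smul' : ∀ (c : ℝ) (f : X → ℝ), Bdd f → toFun (c • f) = c * toFun f
  mono' : ∀ f g : X → ℝ, Bdd f → Bdd g → (∀ x, f x ≤ g x) → toFun f ≤ toFun g
  one' : toFun (fun _ => 1) = 1

/-- A subgroup `H ≤ G` is co-amenable in `G` if there is a `G`-invariant mean on `G/H`. -/
def CoAmenableIn {G : Type*} [Group G] (H : Subgroup G) : Prop :=
  ∃ m : MeanOn (G ⧸ H), ∀ (g : G) (f : (G ⧸ H) → ℝ), Bdd f →
    m.toFun (fun x => f (g • x)) = m.toFun f

end PP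

open PP


namespace PP

/-- Matrices agreeing up to sign. -/
def PMEq (g g' : SL2 ℝ) : Prop := g'.1 = g.1 ∨ g'.1 = -g.1

lemma PMEq.moebius_eq {g g' : SL2 ℝ} (h : PMEq g g') : moebius g' = moebius g := by
  funext z
  rcases h with h | h <;> unfold moebius <;> rw [h]
  simp only [Matrix.neg_apply]
  have h1 : -(g.1 0 0) * z + -(g.1 0 1) = -(g.1 0 0 * z + g.1 0 1) := by ring
  have h2 : -(g.1 1 0) * z + -(g.1 1 1) = -(g.1 1 0 * z + g.1 1 1) := by ring
  rw [h1, h2, neg_div_neg_eq]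

lemma PMEq.mdenom_ne {g g' : SL2 ℝ} (h : PMEq g g') {z : ℝ} (hz : mdenom g z ≠ 0) :
    mdenom g' z ≠ 0 := by
  rcases h with h | h <;> unfold mdenom at * <;> rw [h]
  · exact hz
  · simp only [Matrix.neg_apply]
    intro h0
    exact hz (by linarith)

lemma PMEq.symm {g g' : SL2 ℝ} (h : PMEq g g') : PMEq g' g := by
  rcases h with h | h
  · exact Or.inl h.symm
  · exact Or.inr (by rw [h, neg_neg])

lemma quad_eq_zero {c e f z₁ z₂ z₃ : ℝ} (h12 : z₁ ≠ z₂) (h13 : z₁ ≠ z₃) (h23 : z₂ ≠ z₃)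
    (e1 : c * z₁ ^ 2 + e * z₁ + f = 0) (e2 : c * z₂ ^ 2 + e * z₂ + f = 0)
    (e3 : c * z₃ ^ 2 + e * z₃ + f = 0) : c = 0 ∧ e = 0 ∧ f = 0 := by
  have k12 : (z₁ - z₂) * (c * (z₁ + z₂) + e) = 0 := by linear_combination e1 - e2
  have k13 : (z₁ - z₃) * (c * (z₁ + z₃) + e) = 0 := by linear_combination e1 - e3
  have l12 : c * (z₁ + z₂) + e = 0 :=
    (mul_eq_zero.mp k12).resolve_left (sub_ne_zero.mpr h12)
  have l13 : c * (z₁ + z₃) + e = 0 :=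
    (mul_eq_zero.mp k13).resolve_left (sub_ne_zero.mpr h13)
  have hc : c = 0 := by
    have hz : c * (z₂ - z₃) = 0 := by linear_combination l12 - l13
    exact (mul_eq_zero.mp hz).resolve_right (sub_ne_zero.mpr h23)
  have he : e = 0 := by linear_combination l12 - (z₁ + z₂) * hc
  exact ⟨hc, he, by linear_combination e1 - z₁ ^ 2 * hc - z₁ * he⟩

lemma mdenom_root_unique (g : SL2 ℝ) {z₁ z₂ : ℝ} (h1 : mdenom g z₁ = 0)
    (h2 : mdenom g z₂ = 0) : z₁ = z₂ := by
  have hdet := det_eq g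
  unfold mdenom at h1 h2
  by_cases hc : g.1 1 0 = 0
  · exfalso
    have hd : g.1 1 1 = 0 := by simpa [hc] using h1
    rw [hc, hd] at hdet
    simp at hdet
  · have hz : g.1 1 0 * (z₁ - z₂) = 0 := by linear_combination h1 - h2
    have := (mul_eq_zero.mp hz).resolve_left hc
    linarith [sub_eq_zero.mp this]

lemma pmeq_of_eqOn {g g' : SL2 ℝ} {s : Set ℝ} (hs : s.Infinite)
    (h : ∀ z ∈ s, moebius g z = moebius g' z) : PMEq g g' := by
  set m := g⁻¹ * g' with hm
  have hdetm := det_eq m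
  have hfin1 : {z : ℝ | mdenom g z = 0}.Finite :=
    Set.Subsingleton.finite (fun a ha b hb => mdenom_root_unique g ha hb)
  have hfin2 : {z : ℝ | mdenom g' z = 0}.Finite :=
    Set.Subsingleton.finite (fun a ha b hb => mdenom_root_unique g' ha hb)
  have hs' : (s \ ({z : ℝ | mdenom g z = 0} ∪ {z : ℝ | mdenom g' z = 0})).Infinite :=
    hs.diff (hfin1.union hfin2)
  have key : ∀ z ∈ s \ ({z : ℝ | mdenom g z = 0} ∪ {z : ℝ | mdenom g' z = 0}),
      m.1 1 0 * z ^ 2 + (m.1 1 1 - m.1 0 0) * z + -(m.1 0 1) = 0 := by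
    rintro z ⟨hzs, hzn⟩
    rw [Set.mem_union, not_or] at hzn
    obtain ⟨hdg, hdg'⟩ := hzn
    rw [Set.mem_setOf_eq] at hdg hdg'
    have heq := h z hzs
    have h1 : mdenom g⁻¹ (moebius g' z) ≠ 0 := by
      rw [← heq, mdenom_inv g z hdg]
      exact one_div_ne_zero hdg
    have hdm : mdenom m z ≠ 0 := mdenom_mul_ne _ _ _ hdg' h1
    have hfix : moebius m z = z := by
      rw [hm, moebius_mul g⁻¹ g' z hdg' h1, ← heq]
      exact (moebius_inv g z hdg).2
    unfold moebius at hfix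
    unfold mdenom at hdm
    rw [div_eq_iff hdm] at hfix
    linear_combination -hfix
  obtain ⟨z₁, hz₁⟩ := hs'.nonempty
  obtain ⟨z₂, hz₂, hz₂1⟩ := (hs'.diff (Set.finite_singleton z₁)).nonempty
  obtain ⟨z₃, ⟨hz₃, hz₃1⟩, hz₃2⟩ :=
    ((hs'.diff (Set.finite_singleton z₁)).diff (Set.finite_singleton z₂)).nonempty
  have hne21 : z₂ ≠ z₁ := by simpa using hz₂1
  have hne31 : z₃ ≠ z₁ := by simpa using hz₃1
  have hne32 : z₃ ≠ z₂ := by simpa using hz₃2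
  obtain ⟨hc0, he0, hf0⟩ := quad_eq_zero hne21.symm hne31.symm hne32.symm
    (key z₁ hz₁) (key z₂ hz₂) (key z₃ hz₃)
  have hb0 : m.1 0 1 = 0 := by linarith [neg_eq_zero.mp hf0]
  have hdd : m.1 1 1 = m.1 0 0 := by linarith [sub_eq_zero.mp he0]
  have haa : m.1 0 0 = 1 ∨ m.1 0 0 = -1 := by
    have h11 : (m.1 0 0 - 1) * (m.1 0 0 + 1) = 0 := by
      have hd2 := det_eq m
      linear_combination hd2 - m.1 0 0 * hdd + m.1 1 0 * hb0
    rcases mul_eq_zero.mp h11 with h' | h'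
    · left; linarith
    · right; linarith
  have hgm : g * m = g' := by rw [hm, mul_inv_cancel_left]
  have hcoe : g'.1 = g.1 * m.1 := by rw [← hgm, Matrix.SpecialLinearGroup.coe_mul]
  rcases haa with h' | h'
  · left
    have hm1 : m.1 = 1 := by
      ext i j
      fin_cases i <;> fin_cases j <;>
        simp [Matrix.one_apply, hc0, hb0, hdd, h']
    rw [hcoe, hm1, mul_one]
  · right
    have hm1 : m.1 = -1 := by
      ext i j
      fin_cases i <;> fin_cases j <;>
        simp [Matrix.one_apply, hc0, hb0, hdd, h']
    rw [hcoe, hm1, mul_neg_one]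

end PP


namespace PP

lemma exists_uniform_piece {M : Set (SL2 ℝ)} {h : ℝ ≃ₜ ℝ} {B : Finset ℝ}
    (hB : ∀ x ∉ B, ∃ g ∈ M, IsLocalPiece h g x) {u v : ℝ} (huv : u < v)
    (hI : ∀ b ∈ B, b ∉ Set.Ioo u v) :
    ∃ g ∈ M, ∀ y ∈ Set.Ioo u v, mdenom g y ≠ 0 ∧ ∀ᶠ z in 𝓝 y, h z = moebius g z := by
  have hmid : (u + v) / 2 ∈ Set.Ioo u v := ⟨by linarith, by linarith⟩
  have hmidB : (u + v) / 2 ∉ B := fun hmem => hI _ hmem hmid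
  obtain ⟨g, hgM, hdg, heg⟩ := hB _ hmidB
  set U : Set ℝ := {y | ∀ᶠ z in 𝓝 y, h z = moebius g z} with hU
  set V : Set ℝ := {y | ∃ g' : SL2 ℝ, IsLocalPiece h g' y ∧ ¬ PMEq g g'} with hV
  have hUopen : IsOpen U := by
    rw [isOpen_iff_mem_nhds]
    intro y hy
    exact hy.eventually_nhds
  have hVopen : IsOpen V := by
    rw [isOpen_iff_mem_nhds]
    rintro y ⟨g', ⟨hd', he'⟩, hne⟩
    filter_upwards [he'.eventually_nhds, eventually_mdenom_ne g' hd'] with z hz1 hz2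
    exact ⟨g', ⟨hz2, hz1⟩, hne⟩
  have hdisj : Disjoint U V := by
    rw [Set.disjoint_left]
    rintro y hyU ⟨g', ⟨hd', he'⟩, hne⟩
    apply hne
    have hcomb : ∀ᶠ z in 𝓝 y, moebius g z = moebius g' z := by
      filter_upwards [hyU, he'] with z h1 h2
      rw [← h1, h2]
    rw [Metric.eventually_nhds_iff] at hcomb
    obtain ⟨ε, hε, hball⟩ := hcomb
    refine pmeq_of_eqOn (Set.Ioo_infinite (show y - ε < y + ε by linarith)) ?_
    intro z hz
    refine hball ?_
    rw [Real.dist_eq, abs_lt]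
    exact ⟨by linarith [hz.1], by linarith [hz.2]⟩
  have hcover : Set.Ioo u v ⊆ U ∪ V := by
    intro y hy
    obtain ⟨g', hg'M, hp'⟩ := hB y (fun hmem => hI y hmem hy)
    by_cases hpm : PMEq g g'
    · left
      have hmo := hpm.moebius_eq
      filter_upwards [hp'.2] with z hz
      rw [hz, hmo]
    · right
      exact ⟨g', hp', hpm⟩
  have hsub : Set.Ioo u v ⊆ U :=
    isPreconnected_Ioo.subset_left_of_subset_union hUopen hVopen hdisj hcover
      ⟨(u + v) / 2, hmid, heg⟩
  refine ⟨g, hgM, fun y hy => ⟨?_, hsub hy⟩⟩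
  obtain ⟨g', hg'M, hp'⟩ := hB y (fun hmem => hI y hmem hy)
  by_cases hpm : PMEq g g'
  · exact hpm.symm.mdenom_ne hp'.1
  · exact absurd ⟨g', hp', hpm⟩ (Set.disjoint_left.mp hdisj (hsub hy))

lemma side_limit {h : ℝ ≃ₜ ℝ} {g : SL2 ℝ} {x : ℝ} {l : Filter ℝ} [l.NeBot] (hl : l ≤ 𝓝 x)
    (hev : ∀ᶠ y in l, h y = moebius g y ∧ mdenom g y ≠ 0) :
    mdenom g x ≠ 0 ∧ moebius g x = h x := by
  have hd : mdenom g x ≠ 0 := by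
    intro hd0
    have hdet := det_eq g
    unfold mdenom at hd0
    have hnum : g.1 0 0 * x + g.1 0 1 ≠ 0 := by
      intro hn0
      have h01 : (0 : ℝ) = 1 := by
        linear_combination g.1 1 0 * hn0 - g.1 0 0 * hd0 + hdet
      norm_num at h01
    have hnumt : Tendsto (fun y : ℝ => |g.1 0 0 * y + g.1 0 1|) l
        (𝓝 |g.1 0 0 * x + g.1 0 1|) :=
      (((continuous_const.mul continuous_id).add continuous_const).abs.tendsto x).mono_left hl
    have hdent : Tendsto (fun y : ℝ => |mdenom g y|) l (𝓝[>] 0) := by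
      rw [tendsto_nhdsWithin_iff]
      constructor
      · have := ((mdenom_continuous g).abs.tendsto x).mono_left hl
        unfold mdenom at this ⊢
        rwa [hd0, abs_zero] at this
      · filter_upwards [hev] with y hy
        exact abs_pos.mpr hy.2
    have htop : Tendsto (fun y : ℝ => |g.1 0 0 * y + g.1 0 1| * (|mdenom g y|)⁻¹) l atTop :=
      Filter.Tendsto.pos_mul_atTop (abs_pos.mpr hnum) hnumt hdent.inv_tendsto_nhdsGT_zero
    have habs : Tendsto (fun y : ℝ => |h y|) l atTop := by
      refine Filter.Tendsto.congr' ?_ htop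
      filter_upwards [hev] with y hy
      rw [hy.1]
      unfold moebius mdenom
      rw [abs_div, div_eq_mul_inv]
    have hlim : Tendsto (fun y : ℝ => |h y|) l (𝓝 |h x|) :=
      ((h.continuous.abs).tendsto x).mono_left hl
    exact not_tendsto_nhds_of_tendsto_atTop habs _ hlim
  have hcont : ContinuousAt (moebius g) x := by
    apply ContinuousAt.div
    · exact ((continuous_const.mul continuous_id).add continuous_const).continuousAt
    · exact ((continuous_const.mul continuous_id).add continuous_const).continuousAt
    · exact hd
  have h1 : Tendsto (moebius g) l (𝓝 (moebius g x)) := hcont.tendsto.mono_left hl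
  have h2 : Tendsto h l (𝓝 (h x)) := (h.continuous.tendsto x).mono_left hl
  have h2' : Tendsto (moebius g) l (𝓝 (h x)) := by
    refine Filter.Tendsto.congr' ?_ h2
    filter_upwards [hev] with y hy
    exact hy.1
  exact ⟨hd, tendsto_nhds_unique h1 h2'⟩

end PP


namespace PP

lemma breakpoint_mem_fixHyp {A : Subring ℝ} (hAQ : A ≤ ratSubring)
    (hQfix : ∀ r : ℚ, ((r : ℝ)) ∈ FixHyp A)
    (h : ℝ ≃ₜ ℝ) (hpw : IsPiecewiseIn (entriesIn A) h) (x : ℝ) (hx : IsBreakpoint h x) :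
    x ∈ FixHyp A := by
  obtain ⟨B, hB⟩ := hpw
  have hBx : IsClosed ((B : Set ℝ) \ {x}) := (B.finite_toSet.diff).isClosed
  have hxo : x ∈ ((B : Set ℝ) \ {x})ᶜ := fun hmem => hmem.2 rfl
  have hev := hBx.isOpen_compl.eventually_mem hxo
  rw [Metric.eventually_nhds_iff] at hev
  obtain ⟨δ, hδ, hball⟩ := hev
  have hIr : ∀ b ∈ B, b ∉ Set.Ioo x (x + δ) := by
    intro b hb hmem
    refine hball (y := b) ?_ ⟨hb, fun hbx => (ne_of_gt hmem.1) hbx⟩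
    rw [Real.dist_eq, abs_lt]
    exact ⟨by linarith [hmem.1], by linarith [hmem.2]⟩
  have hIl : ∀ b ∈ B, b ∉ Set.Ioo (x - δ) x := by
    intro b hb hmem
    refine hball (y := b) ?_ ⟨hb, fun hbx => (ne_of_lt hmem.2) hbx⟩
    rw [Real.dist_eq, abs_lt]
    exact ⟨by linarith [hmem.1], by linarith [hmem.2]⟩
  obtain ⟨g₂, hg₂M, hg₂⟩ := exists_uniform_piece hB (lt_add_of_pos_right x hδ) hIr
  obtain ⟨g₁, hg₁M, hg₁⟩ := exists_uniform_piece hB (show x - δ < x by linarith) hIl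
  have hevL : ∀ᶠ y in 𝓝[<] x, h y = moebius g₁ y ∧ mdenom g₁ y ≠ 0 := by
    filter_upwards [Ioo_mem_nhdsLT_of_mem
      (show x ∈ Set.Ioc (x - δ) x from ⟨by linarith, le_refl x⟩)] with y hy
    exact ⟨(hg₁ y hy).2.self_of_nhds, (hg₁ y hy).1⟩
  have hevR : ∀ᶠ y in 𝓝[>] x, h y = moebius g₂ y ∧ mdenom g₂ y ≠ 0 := by
    filter_upwards [Ioo_mem_nhdsGT_of_mem
      (show x ∈ Set.Ico x (x + δ) from ⟨le_refl x, by linarith⟩)] with y hy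
    exact ⟨(hg₂ y hy).2.self_of_nhds, (hg₂ y hy).1⟩
  obtain ⟨hd₁, hm₁⟩ := side_limit nhdsWithin_le_nhds hevL
  obtain ⟨hd₂, hm₂⟩ := side_limit nhdsWithin_le_nhds hevR
  have hnpm : ¬ PMEq g₁ g₂ := by
    intro hpm
    apply hx
    refine ⟨g₁, hd₁, ?_⟩
    filter_upwards [Ioo_mem_nhds (show x - δ < x by linarith)
      (show x < x + δ by linarith)] with z hz
    rcases lt_trichotomy z x with hlt | heq | hgt
    · exact (hg₁ z ⟨hz.1, hlt⟩).2.self_of_nhds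
    · rw [heq]
      exact hm₁.symm
    · rw [(hg₂ z ⟨hgt, hz.2⟩).2.self_of_nhds, hpm.moebius_eq]
  set q := g₁⁻¹ * g₂ with hq
  have hqM : q ∈ entriesIn A := mul_entriesIn (inv_entriesIn hg₁M) hg₂M
  have hden1 : mdenom g₁⁻¹ (moebius g₂ x) ≠ 0 := by
    rw [hm₂, ← hm₁]
    exact (moebius_inv g₁ x hd₁).1
  have hdq : mdenom q x ≠ 0 := mdenom_mul_ne _ _ _ hd₂ hden1
  have hfix : moebius q x = x := by
    rw [hq, moebius_mul g₁⁻¹ g₂ x hd₂ hden1, hm₂, ← hm₁]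
    exact (moebius_inv g₁ x hd₁).2
  have hdet := det_eq q
  have hquad : q.1 1 0 * x ^ 2 + (q.1 1 1 - q.1 0 0) * x - q.1 0 1 = 0 := by
    have hfix' := hfix
    unfold moebius at hfix'
    unfold mdenom at hdq
    rw [div_eq_iff hdq] at hfix'
    linear_combination -hfix'
  by_cases htr : |Matrix.trace (q.1 : Matrix (Fin 2) (Fin 2) ℝ)| > 2
  · exact ⟨q, hqM, htr, hdq, hfix⟩
  rw [not_lt, Matrix.trace_fin_two] at htr
  have htr2 : (q.1 0 0 + q.1 1 1) ^ 2 ≤ 4 := by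
    nlinarith [abs_nonneg (q.1 0 0 + q.1 1 1), sq_abs (q.1 0 0 + q.1 1 1),
      neg_abs_le (q.1 0 0 + q.1 1 1), le_abs_self (q.1 0 0 + q.1 1 1)]
  by_cases hc : q.1 1 0 = 0
  · exfalso
    by_cases had : q.1 0 0 = q.1 1 1
    · apply hnpm
      have hb : q.1 0 1 = 0 := by
        rw [hc] at hquad
        linear_combination -hquad - x * had
      have haa : q.1 0 0 = 1 ∨ q.1 0 0 = -1 := by
        have h11 : (q.1 0 0 - 1) * (q.1 0 0 + 1) = 0 := by
          linear_combination hdet + q.1 0 0 * had + q.1 1 0 * hb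
        rcases mul_eq_zero.mp h11 with h' | h'
        · left; linarith
        · right; linarith
      have hg₂q : g₂ = g₁ * q := by rw [hq, mul_inv_cancel_left]
      have hcoe : g₂.1 = g₁.1 * q.1 := by
        rw [hg₂q, Matrix.SpecialLinearGroup.coe_mul]
      rcases haa with h' | h'
      · left
        have hq1 : q.1 = 1 := by
          ext i j
          fin_cases i <;> fin_cases j <;> simp [Matrix.one_apply, hc, hb, ← had, h']
        rw [hcoe, hq1, mul_one]
      · right
        have hq1 : q.1 = -1 := by
          ext i j
          fin_cases i <;> fin_cases j <;> simp [Matrix.one_apply, hc, hb, ← had, h']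
        rw [hcoe, hq1, mul_neg_one]
    · have hid : (q.1 0 0 + q.1 1 1) ^ 2 - 4 = (q.1 0 0 - q.1 1 1) ^ 2 := by
        linear_combination 4 * hdet + 4 * q.1 0 1 * hc
      have h0 : (q.1 0 0 - q.1 1 1) ^ 2 ≤ 0 := by linarith
      apply had
      nlinarith [sq_nonneg (q.1 0 0 - q.1 1 1)]
  · have hsq : (2 * q.1 1 0 * x + (q.1 1 1 - q.1 0 0)) ^ 2 = (q.1 0 0 + q.1 1 1) ^ 2 - 4 := by
      linear_combination 4 * q.1 1 0 * hquad - 4 * hdet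
    have heq0 : 2 * q.1 1 0 * x + (q.1 1 1 - q.1 0 0) = 0 := by
      nlinarith [sq_nonneg (2 * q.1 1 0 * x + (q.1 1 1 - q.1 0 0))]
    have hx' : x = (q.1 0 0 - q.1 1 1) / (2 * q.1 1 0) := by
      rw [eq_div_iff (by intro h0; exact hc (by linarith [mul_eq_zero.mp h0]))]
      linarith
    obtain ⟨ra, hra⟩ := hAQ (hqM 0 0)
    obtain ⟨rd, hrd⟩ := hAQ (hqM 1 1)
    obtain ⟨rc, hrc⟩ := hAQ (hqM 1 0)
    rw [Rat.coe_castHom] at hra hrd hrc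
    have hxr : x = (((ra - rd) / (2 * rc) : ℚ) : ℝ) := by
      push_cast
      rw [hx', hra, hrd, hrc]
    rw [hxr]
    exact hQfix _

end PP


namespace PP

lemma upgrade_piece {A : Subring ℝ} {h : ℝ ≃ₜ ℝ} (hpw : IsPiecewiseIn (entriesIn A) h)
    {x : ℝ} {g : SL2 ℝ} (hg : IsLocalPiece h g x) :
    ∃ g' ∈ entriesIn A, IsLocalPiece h g' x := by
  obtain ⟨B, hB⟩ := hpw
  obtain ⟨hdg, heg⟩ := hg
  have hBx : IsClosed ((B : Set ℝ) \ {x}) := (B.finite_toSet.diff).isClosed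
  have hxo : x ∈ ((B : Set ℝ) \ {x})ᶜ := fun hmem => hmem.2 rfl
  have hcomb : ∀ᶠ z in 𝓝 x, h z = moebius g z ∧ z ∈ ((B : Set ℝ) \ {x})ᶜ :=
    heg.and (hBx.isOpen_compl.eventually_mem hxo)
  rw [Metric.eventually_nhds_iff] at hcomb
  obtain ⟨δ, hδ, hball⟩ := hcomb
  have hIr : ∀ b ∈ B, b ∉ Set.Ioo x (x + δ) := by
    intro b hb hmem
    refine (hball (y := b) ?_).2 ⟨hb, fun hbx => (ne_of_gt hmem.1) hbx⟩
    rw [Real.dist_eq, abs_lt]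
    exact ⟨by linarith [hmem.1], by linarith [hmem.2]⟩
  obtain ⟨g', hg'M, hprops⟩ := exists_uniform_piece hB (lt_add_of_pos_right x hδ) hIr
  have hpm : PMEq g g' := by
    refine pmeq_of_eqOn (Set.Ioo_infinite (lt_add_of_pos_right x hδ)) ?_
    intro z hz
    have hdist : dist z x < δ := by
      rw [Real.dist_eq, abs_lt]
      exact ⟨by linarith [hz.1], by linarith [hz.2]⟩
    rw [← (hball hdist).1]
    exact (hprops z hz).2.self_of_nhds
  refine ⟨g', hg'M, hpm.mdenom_ne hdg, ?_⟩
  filter_upwards [heg] with z hz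
  rw [hz, ← hpm.moebius_eq]

lemma sIntR_le_rat (S : Set ℕ) : SIntR S ≤ ratSubring := by
  apply Subring.closure_le.mpr
  rintro x ⟨p, _, rfl⟩
  exact ⟨(p : ℚ)⁻¹, by rw [Rat.coe_castHom]; push_cast; ring⟩

lemma rat_mem_fixHyp {S : Set ℕ} (hS : ∀ q ∈ S, Nat.Prime q) (hne : S.Nonempty) (r : ℚ) :
    ((r : ℝ)) ∈ FixHyp (SIntR S) := by
  obtain ⟨p, hpS⟩ := hne
  have hp := hS p hpS
  have hp2 : (2 : ℝ) ≤ (p : ℝ) := by exact_mod_cast hp.two_le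
  have hppos : (0 : ℝ) < p := by linarith
  have hpne : (p : ℝ) ≠ 0 := ne_of_gt hppos
  have hcop : Int.gcd r.num (r.den : ℤ) = 1 := by
    unfold Int.gcd
    rw [Int.natAbs_natCast]
    exact r.reduced
  have hbez : ((1 : ℕ) : ℤ) = r.num * Int.gcdA r.num r.den + (r.den : ℤ) * Int.gcdB r.num r.den := by
    rw [← hcop]
    exact Int.gcd_eq_gcd_ab r.num (r.den : ℤ)
  have hbezR : (1 : ℝ) = (r.num : ℝ) * ((Int.gcdA r.num r.den : ℤ) : ℝ)
      + (r.den : ℝ) * ((Int.gcdB r.num r.den : ℤ) : ℝ) := by exact_mod_cast hbez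
  have hdenne : ((r.den : ℝ)) ≠ 0 := Nat.cast_ne_zero.mpr r.den_nz
  have hγdet : (!![((Int.gcdB r.num r.den : ℤ) : ℝ), (r.num : ℝ);
      (-(Int.gcdA r.num r.den : ℤ) : ℝ), (r.den : ℝ)]).det = 1 := by
    rw [Matrix.det_fin_two_of]
    push_cast
    linarith [hbezR]
  set γ : SL2 ℝ := ⟨_, hγdet⟩ with hγ
  have hDdet : (!![(p : ℝ), 0; 0, (p : ℝ)⁻¹]).det = 1 := by
    rw [Matrix.det_fin_two_of, mul_inv_cancel₀ hpne]
    ring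
  set D : SL2 ℝ := ⟨_, hDdet⟩ with hD
  have hpinvA : (p : ℝ)⁻¹ ∈ SIntR S := Subring.subset_closure ⟨p, hpS, rfl⟩
  have hγA : γ ∈ entriesIn (SIntR S) := by
    intro i j
    fin_cases i <;> fin_cases j <;>
      simp only [hγ, Matrix.cons_val', Matrix.cons_val_zero, Matrix.cons_val_one,
        Matrix.head_cons, Matrix.head_fin_const, Matrix.empty_val', Matrix.cons_val_fin_one] <;>
      first
        | exact intCast_mem (SIntR S) _
        | exact (SIntR S).neg_mem (intCast_mem (SIntR S) _)
        | exact_mod_cast intCast_mem (SIntR S) (r.num)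
        | exact_mod_cast natCast_mem (SIntR S) (r.den)
  have hDA : D ∈ entriesIn (SIntR S) := by
    intro i j
    fin_cases i <;> fin_cases j <;>
      simp only [hD, Matrix.cons_val', Matrix.cons_val_zero, Matrix.cons_val_one,
        Matrix.head_cons, Matrix.head_fin_const, Matrix.empty_val', Matrix.cons_val_fin_one] <;>
      first
        | exact natCast_mem (SIntR S) p
        | exact hpinvA
        | exact (SIntR S).zero_mem
  have hγd0 : mdenom γ 0 ≠ 0 := by
    unfold mdenom
    simp [hγ]
  have hγm0 : moebius γ 0 = (r : ℝ) := by
    rw [Rat.cast_def]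
    unfold moebius
    simp [hγ]
  set H := γ * D * γ⁻¹ with hH
  have hHA : H ∈ entriesIn (SIntR S) :=
    mul_entriesIn (mul_entriesIn hγA hDA) (inv_entriesIn hγA)
  have hHtr : |Matrix.trace (H.1 : Matrix (Fin 2) (Fin 2) ℝ)| > 2 := by
    have hconj : H = (γ⁻¹)⁻¹ * D * γ⁻¹ := by rw [inv_inv]
    rw [hconj, trace_conj]
    have htrD : Matrix.trace (D.1 : Matrix (Fin 2) (Fin 2) ℝ) = (p : ℝ) + (p : ℝ)⁻¹ := by
      rw [Matrix.trace_fin_two]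
      simp [hD]
    have hinv : (0 : ℝ) < (p : ℝ)⁻¹ := by positivity
    rw [htrD, abs_of_pos (by positivity)]
    linarith
  obtain ⟨hγid, hγiv⟩ := moebius_inv γ 0 hγd0
  rw [hγm0] at hγid hγiv
  have hD0d : mdenom D 0 ≠ 0 := by
    unfold mdenom
    simp [hD]
    exact Nat.Prime.ne_zero hp
  have hD0m : moebius D 0 = 0 := by
    unfold moebius
    simp [hD]
  have hmidd : mdenom (D * γ⁻¹) (r : ℝ) ≠ 0 :=
    mdenom_mul_ne D γ⁻¹ _ hγid (by rw [hγiv]; exact hD0d)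
  have hmidm : moebius (D * γ⁻¹) (r : ℝ) = 0 := by
    rw [moebius_mul D γ⁻¹ _ hγid (by rw [hγiv]; exact hD0d), hγiv, hD0m]
  have hfinald : mdenom H (r : ℝ) ≠ 0 := by
    rw [hH, mul_assoc]
    exact mdenom_mul_ne γ (D * γ⁻¹) _ hmidd (by rw [hmidm]; exact hγd0)
  have hfinalm : moebius H (r : ℝ) = (r : ℝ) := by
    rw [hH, mul_assoc, moebius_mul γ (D * γ⁻¹) _ hmidd (by rw [hmidm]; exact hγd0),
      hmidm, hγm0]
  exact ⟨H, hHA, hHtr, hfinald, hfinalm⟩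

end PP

/-- For a non-empty set `S` of primes, every breakpoint of every
element of `H(ℝ)` with pieces in `SL₂(ℤ[1/S])` is a fixed point of a hyperbolic
element of `SL₂(ℤ[1/S])`; consequently `Γ_S = H(ℤ[1/S])`. -/
theorem breakpoints_fixed_by_hyperbolic (S : Set ℕ)
    (hS : ∀ q ∈ S, Nat.Prime q) (hne : S.Nonempty) :
    (∀ h : ℝ ≃ₜ ℝ, IsPiecewiseIn (entriesIn (SIntR S)) h →
      ∀ x : ℝ, IsBreakpoint h x → x ∈ FixHyp (SIntR S)) ∧
    Gamma S = HGroup (SIntR S) := by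
  have hAQ := sIntR_le_rat S
  have hQfix := rat_mem_fixHyp hS hne
  have part1 : ∀ h : ℝ ≃ₜ ℝ, IsPiecewiseIn (entriesIn (SIntR S)) h →
      ∀ x : ℝ, IsBreakpoint h x → x ∈ FixHyp (SIntR S) :=
    fun h hpw x hx => breakpoint_mem_fixHyp hAQ hQfix h hpw x hx
  refine ⟨part1, ?_⟩
  apply le_antisymm
  · intro h hpw
    have hpw' : IsPiecewiseIn (entriesIn (SIntR S)) h := hpw
    have hloc : ∀ h' : ℝ ≃ₜ ℝ, IsPiecewiseIn (entriesIn (SIntR S)) h' →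
        LocallyIn (SIntR S) (FixHyp (SIntR S)) h' := by
      intro h' hp x hxΦ
      have hnb : ¬ IsBreakpoint h' x := fun hb => hxΦ (part1 h' hp x hb)
      rw [IsBreakpoint, not_not] at hnb
      obtain ⟨g, hg⟩ := hnb
      exact upgrade_piece hp hg
    exact ⟨hpw', hloc h hpw', hloc h⁻¹ ((PW (SIntR S)).inv_mem hpw')⟩
  · intro h hmem
    exact hmem.1
end
end

section
/- Let A < ℝ be a unital subring and let g = (a b; c d) ∈ SL₂(A) with c ≠ 0, and let x ∈ ℝ satisfy g·x ≠ ∞. Then there exists a hyperbolic element q₀ ∈ SL₂(A) with q₀·∞ = g·∞ whose two fixed points ξ₋, ξ₊ lie in ℝ and are such that the open interval of ℝ they determine contains g·x but does not contain g·∞. Explicitly, q₀ may be taken of the form (a, b+na; c, d+nc) for a suitable integer n. -/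
open Matrix Filter Topology MeasureTheory

noncomputable section

open PP

set_option maxHeartbeats 1000000 in
/-- Let `A < ℝ` be a unital subring, `g = (a b; c d) ∈ SL₂(A)` with
`c ≠ 0`, and `x ∈ ℝ` with `g·x ≠ ∞`. Then some column operation `q₀ = (a, b+na; c, d+nc)`,
`n ∈ ℤ`, is a hyperbolic element of `SL₂(A)` with `q₀·∞ = g·∞` whose two fixed points
`ξ₋ < ξ₊` are real and such that the open interval `(ξ₋, ξ₊)` contains `g·x` but not
`g·∞ = a/c`. -/
theorem column_trick (A : Subring ℝ) (g : SL2 ℝ) (hg : g ∈ entriesIn A)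
    (hc : g.1 1 0 ≠ 0) (x : ℝ) (hx : mdenom g x ≠ 0) :
    ∃ (n : ℤ) (q₀ : SL2 ℝ),
      (q₀ : Matrix (Fin 2) (Fin 2) ℝ) =
        !![g.1 0 0, g.1 0 1 + (n : ℝ) * g.1 0 0;
           g.1 1 0, g.1 1 1 + (n : ℝ) * g.1 1 0] ∧
      q₀ ∈ entriesIn A ∧
      |Matrix.trace (q₀ : Matrix (Fin 2) (Fin 2) ℝ)| > 2 ∧
      ∃ ξm ξp : ℝ, ξm < ξp ∧
        mdenom q₀ ξm ≠ 0 ∧ moebius q₀ ξm = ξm ∧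
        mdenom q₀ ξp ≠ 0 ∧ moebius q₀ ξp = ξp ∧
        moebius g x ∈ Set.Ioo ξm ξp ∧
        g.1 0 0 / g.1 1 0 ∉ Set.Ioo ξm ξp := by
  have hma := hg 0 0
  have hmb := hg 0 1
  have hmc := hg 1 0
  have hmd := hg 1 1
  have hdet : g.1 0 0 * g.1 1 1 - g.1 0 1 * g.1 1 0 = 1 := det_eq g
  set a := g.1 0 0 with ha
  set b := g.1 0 1 with hb
  set c := g.1 1 0 with hcc
  set d := g.1 1 1 with hd
  have hm0 : c * x + d ≠ 0 := hx
  set m := c * x + d with hm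
  set y := moebius g x with hy
  have hy' : y = (a * x + b) / m := hy
  have hcy : c * y - a = -(1 / m) := by
    rw [hy', hm]
    have hm1 : c * x + d ≠ 0 := by rw [← hm]; exact hm0
    field_simp
    linear_combination -hdet
  have hu0 : c / m ≠ 0 := div_ne_zero hc hm0
  clear_value a b c d m y
  obtain ⟨n, hn⟩ : ∃ n : ℤ, c * (c * y ^ 2 + (d - a) * y - b) < (n : ℝ) * (c / m) := by
    rcases hu0.lt_or_gt with h | h
    · obtain ⟨k, hk⟩ := exists_int_lt ((c * (c * y ^ 2 + (d - a) * y - b)) / (c / m))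
      exact ⟨k, by rwa [lt_div_iff_of_neg h] at hk⟩
    · obtain ⟨k, hk⟩ := exists_int_gt ((c * (c * y ^ 2 + (d - a) * y - b)) / (c / m))
      exact ⟨k, by rwa [div_lt_iff₀ h] at hk⟩
  have hQ : c * (c * y ^ 2 + (d - a + (n : ℝ) * c) * y - (b + (n : ℝ) * a)) < 0 := by
    have h2 : c * (c * y ^ 2 + (d - a + (n : ℝ) * c) * y - (b + (n : ℝ) * a))
        = c * (c * y ^ 2 + (d - a) * y - b) - (n : ℝ) * (c / m) := by
      have hcy' : c * y - a = -(1 / m) := hcy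
      linear_combination ((n : ℝ) * c) * hcy'
    rw [h2]
    linarith
  have hdetq : Matrix.det !![a, b + (n : ℝ) * a; c, d + (n : ℝ) * c] = 1 := by
    rw [Matrix.det_fin_two_of]; linear_combination hdet
  set q₀ : SL2 ℝ := ⟨!![a, b + (n : ℝ) * a; c, d + (n : ℝ) * c], hdetq⟩ with hq₀
  have hq00 : q₀.1 0 0 = a := rfl
  have hq01 : q₀.1 0 1 = b + (n : ℝ) * a := rfl
  have hq10 : q₀.1 1 0 = c := rfl
  have hq11 : q₀.1 1 1 = d + (n : ℝ) * c := rfl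
  have h2c : (2 * c : ℝ) ≠ 0 := mul_ne_zero two_ne_zero hc
  -- discriminant positive
  have hid : (2 * c * y + (d - a + (n : ℝ) * c)) ^ 2 < (a + d + (n : ℝ) * c) ^ 2 - 4 := by
    nlinarith [hQ, hdet]
  have hΔpos : 0 < (a + d + (n : ℝ) * c) ^ 2 - 4 :=
    lt_of_le_of_lt (sq_nonneg _) hid
  set r := Real.sqrt ((a + d + (n : ℝ) * c) ^ 2 - 4) with hrdef
  have hr2 : r ^ 2 = (a + d + (n : ℝ) * c) ^ 2 - 4 := Real.sq_sqrt hΔpos.le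
  have hrpos : 0 < r := Real.sqrt_pos.mpr hΔpos
  have habs : |2 * c * y + (d - a + (n : ℝ) * c)| < r := by
    rw [← Real.sqrt_sq_eq_abs, hrdef]
    exact Real.sqrt_lt_sqrt (sq_nonneg _) hid
  obtain ⟨habs1, habs2⟩ := abs_lt.mp habs
  clear_value r
  -- fixed points of q₀
  have hfix : ∀ w : ℝ, w ^ 2 = (a + d + (n : ℝ) * c) ^ 2 - 4 →
      mdenom q₀ ((-(d - a + (n : ℝ) * c) + w) / (2 * c)) ≠ 0 ∧
      moebius q₀ ((-(d - a + (n : ℝ) * c) + w) / (2 * c))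
        = (-(d - a + (n : ℝ) * c) + w) / (2 * c) := by
    intro w hw
    set ξ := (-(d - a + (n : ℝ) * c) + w) / (2 * c) with hξdef
    have hξ : 2 * c * ξ = -(d - a + (n : ℝ) * c) + w := by
      rw [hξdef]; field_simp
    have htw : ((a + d + (n : ℝ) * c) + w) * ((a + d + (n : ℝ) * c) - w) = 4 := by
      linear_combination -hw
    have htw0 : (a + d + (n : ℝ) * c) + w ≠ 0 := by
      intro h0; rw [h0, zero_mul] at htw; norm_num at htw
    have hden : mdenom q₀ ξ = c * ξ + (d + (n : ℝ) * c) := by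
      simp [mdenom, hq10, hq11]
    have hdenval : 2 * (c * ξ + (d + (n : ℝ) * c)) = (a + d + (n : ℝ) * c) + w := by
      linear_combination hξ
    have hden0' : c * ξ + (d + (n : ℝ) * c) ≠ 0 := by
      intro h0; apply htw0; rw [← hdenval, h0]; ring
    refine ⟨by rw [hden]; exact hden0', ?_⟩
    have hmo : moebius q₀ ξ = (a * ξ + (b + (n : ℝ) * a)) / (c * ξ + (d + (n : ℝ) * c)) := by
      simp [moebius, hq00, hq01, hq10, hq11]
    rw [hmo, div_eq_iff hden0']
    have h4 : (4 * c) * (a * ξ + (b + (n : ℝ) * a))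
        = (4 * c) * (ξ * (c * ξ + (d + (n : ℝ) * c))) := by
      linear_combination (-(2 * c * ξ + (d - a + (n : ℝ) * c) + w)) * hξ - hw - 4 * hdet
    exact mul_left_cancel₀ (mul_ne_zero (by norm_num) hc) h4
  have hwr : r ^ 2 = (a + d + (n : ℝ) * c) ^ 2 - 4 := hr2
  have hwr' : (-r) ^ 2 = (a + d + (n : ℝ) * c) ^ 2 - 4 := by rw [neg_pow]; simpa using hr2
  have hfp := hfix r hwr
  have hfm := hfix (-r) hwr'
  -- trace
  have htr : Matrix.trace (q₀ : Matrix (Fin 2) (Fin 2) ℝ) = a + (d + (n : ℝ) * c) := by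
    show Matrix.trace !![a, b + (n : ℝ) * a; c, d + (n : ℝ) * c] = _
    rw [Matrix.trace_fin_two_of]
  have htrabs : |Matrix.trace (q₀ : Matrix (Fin 2) (Fin 2) ℝ)| > 2 := by
    rw [htr]
    nlinarith [abs_nonneg (a + (d + (n : ℝ) * c)), sq_abs (a + (d + (n : ℝ) * c)), hΔpos]
  have hmemA : q₀ ∈ entriesIn A := by
    intro i j
    fin_cases i <;> fin_cases j
    · exact hma
    · exact A.add_mem hmb (A.mul_mem (intCast_mem A n) hma)
    · exact hmc
    · exact A.add_mem hmd (A.mul_mem (intCast_mem A n) hmc)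
  refine ⟨n, q₀, rfl, hmemA, htrabs, ?_⟩
  rcases hc.lt_or_gt with hcneg | hcpos
  · -- c < 0
    have h2cneg : (2 * c : ℝ) < 0 := by linarith
    refine ⟨(-(d - a + (n : ℝ) * c) + r) / (2 * c),
            (-(d - a + (n : ℝ) * c) + -r) / (2 * c), ?_, hfp.1, hfp.2, hfm.1, hfm.2, ⟨?_, ?_⟩, ?_⟩
    · rw [div_lt_iff_of_neg h2cneg, div_mul_cancel₀ _ h2c]; linarith
    · rw [div_lt_iff_of_neg h2cneg]; linarith
    · rw [lt_div_iff_of_neg h2cneg]; linarith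
    · rintro ⟨h1, h2⟩
      have e1 : a / c * (2 * c) = 2 * a := by field_simp
      have h1' := mul_lt_mul_of_neg_right h1 h2cneg
      have h2' := mul_lt_mul_of_neg_right h2 h2cneg
      rw [div_mul_cancel₀ _ h2c, e1] at h1'
      rw [div_mul_cancel₀ _ h2c, e1] at h2'
      nlinarith [h1', h2', hr2]
  · -- 0 < c
    have h2cpos : (0 : ℝ) < 2 * c := by linarith
    refine ⟨(-(d - a + (n : ℝ) * c) + -r) / (2 * c),
            (-(d - a + (n : ℝ) * c) + r) / (2 * c), ?_, hfm.1, hfm.2, hfp.1, hfp.2, ⟨?_, ?_⟩, ?_⟩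
    · rw [div_lt_div_iff₀ h2cpos h2cpos]; nlinarith
    · rw [div_lt_iff₀ h2cpos]; linarith
    · rw [lt_div_iff₀ h2cpos]; linarith
    · rintro ⟨h1, h2⟩
      have e1 : a / c * (2 * c) = 2 * a := by field_simp
      have h1' := mul_lt_mul_of_pos_right h1 h2cpos
      have h2' := mul_lt_mul_of_pos_right h2 h2cpos
      rw [div_mul_cancel₀ _ h2c, e1] at h1'
      rw [div_mul_cancel₀ _ h2c, e1] at h2'
      nlinarith [h1', h2', hr2]
end
end

section
/- Let G be a discrete group and G₁, G₂ < G subgroups. Then G₁ is co-amenable to G₂ relative to G (every convex compact G-space with a G₁-fixed point has a G₂-fixed point) if and only if the G₂-action on the coset space G/G₁ admits an invariant mean on ℓ∞(G/G₁). -/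
open Matrix Filter Topology MeasureTheory

noncomputable section

open PP

namespace PP

/-- `G₁` is co-amenable to `G₂` relative to `G`: every convex compact `G`-space
(a convex compact subset of a locally convex Hausdorff real topological vector space
on which `G` acts by affine homeomorphisms) with a `G₁`-fixed point has a
`G₂`-fixed point. -/
def RelCoAmenable (G : Type u) [Group G] (G₁ G₂ : Subgroup G) : Prop :=
  ∀ (E : Type u) [AddCommGroup E] [Module ℝ E] [TopologicalSpace E]
    [IsTopologicalAddGroup E] [ContinuousSMul ℝ E] [LocallyConvexSpace ℝ E] [T2Space E]
    (K : Set E) (_ : IsCompact K) (hconv : Convex ℝ K)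
    (act : G → K → K)
    (_ : ∀ x, act 1 x = x)
    (_ : ∀ g g' x, act (g * g') x = act g (act g' x))
    (_ : ∀ g, Continuous (act g))
    (_ : ∀ (g : G) (x y : K) (t : ℝ) (ht₀ : 0 ≤ t) (ht₁ : t ≤ 1),
      (act g ⟨t • (x : E) + (1 - t) • (y : E),
        hconv x.2 y.2 ht₀ (by linarith) (by ring)⟩ : E)
        = t • (act g x : E) + (1 - t) • (act g y : E)),
    (∃ x, ∀ h ∈ G₁, act h x = x) → ∃ x, ∀ h ∈ G₂, act h x = x

end PP

namespace RelAux
open PP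

variable {X : Type*}

lemma bdd_const (c : ℝ) : Bdd (fun _ : X => c) := ⟨|c|, fun _ => le_rfl⟩

lemma bddAdd {f g : X → ℝ} (hf : Bdd f) (hg : Bdd g) : Bdd (fun x => f x + g x) := by
  obtain ⟨C, hC⟩ := hf; obtain ⟨D, hD⟩ := hg
  exact ⟨C + D, fun x => (abs_add_le _ _).trans (add_le_add (hC x) (hD x))⟩

lemma bddMulConst {f : X → ℝ} (hf : Bdd f) (c : ℝ) : Bdd (fun x => c * f x) := by
  obtain ⟨C, hC⟩ := hf
  exact ⟨|c| * C, fun x => by rw [abs_mul]; exact mul_le_mul_of_nonneg_left (hC x) (abs_nonneg c)⟩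

lemma bdd_sum {ι : Type*} (s : Finset ι) (f : ι → X → ℝ) (hf : ∀ i ∈ s, Bdd (f i)) :
    Bdd (fun x => ∑ i ∈ s, f i x) := by
  classical
  induction s using Finset.induction_on with
  | empty => exact ⟨0, fun x => by simp⟩
  | insert a s hni ih =>
    have h1 : Bdd (f a) := hf a (Finset.mem_insert_self a s)
    have h2 : Bdd (fun x => ∑ i ∈ s, f i x) := ih fun i hi => hf i (Finset.mem_insert_of_mem hi)
    have := bddAdd h1 h2
    simpa [Finset.sum_insert hni] using this

lemma mean_const (m : MeanOn X) (c : ℝ) : m.toFun (fun _ => c) = c := by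
  have h := m.smul' c (fun _ => 1) (bdd_const 1)
  have he : (c • fun _ : X => (1:ℝ)) = fun _ : X => c := by funext x; simp
  rw [he] at h
  rw [h, m.one', mul_one]

lemma mean_smul (m : MeanOn X) (c : ℝ) {f : X → ℝ} (hf : Bdd f) :
    m.toFun (fun x => c * f x) = c * m.toFun f := by
  have h := m.smul' c f hf
  have he : (c • f) = fun x => c * f x := by funext x; simp
  rwa [he] at h

lemma mean_add (m : MeanOn X) {f g : X → ℝ} (hf : Bdd f) (hg : Bdd g) :
    m.toFun (fun x => f x + g x) = m.toFun f + m.toFun g := by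
  have h := m.add' f g hf hg
  have he : (f + g) = fun x => f x + g x := rfl
  rwa [he] at h

lemma mean_sum {ι : Type*} (m : MeanOn X) (s : Finset ι) (f : ι → X → ℝ)
    (hf : ∀ i ∈ s, Bdd (f i)) :
    m.toFun (fun x => ∑ i ∈ s, f i x) = ∑ i ∈ s, m.toFun (f i) := by
  classical
  induction s using Finset.induction_on with
  | empty =>
    simp only [Finset.sum_empty]
    have := mean_smul m 0 (bdd_const (0:ℝ) (X := X))
    simpa using this
  | insert a s hni ih =>
    have h1 : Bdd (f a) := hf a (Finset.mem_insert_self a s)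
    have h2 : Bdd (fun x => ∑ i ∈ s, f i x) :=
      bdd_sum s f fun i hi => hf i (Finset.mem_insert_of_mem hi)
    have key : m.toFun (fun x => f a x + ∑ i ∈ s, f i x)
        = m.toFun (f a) + m.toFun (fun x => ∑ i ∈ s, f i x) := mean_add m h1 h2
    rw [Finset.sum_insert hni, ← ih (fun i hi => hf i (Finset.mem_insert_of_mem hi)), ← key]
    congr 1
    funext x
    rw [Finset.sum_insert hni]

lemma mean_le_const (m : MeanOn X) {f : X → ℝ} (hf : Bdd f) {c : ℝ} (hc : ∀ x, f x ≤ c) :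
    m.toFun f ≤ c := by
  have := m.mono' f (fun _ => c) hf (bdd_const c) hc
  rwa [mean_const] at this

lemma const_le_mean (m : MeanOn X) {f : X → ℝ} (hf : Bdd f) {c : ℝ} (hc : ∀ x, c ≤ f x) :
    c ≤ m.toFun f := by
  have := m.mono' (fun _ => c) f (bdd_const c) hf hc
  rwa [mean_const] at this

lemma bdd_comp_smul {G : Type*} [Group G] [MulAction G X] (g : G) {f : X → ℝ} :
    Bdd (fun x => f (g • x)) ↔ Bdd f := by
  constructor
  · rintro ⟨C, hC⟩
    refine ⟨C, fun x => ?_⟩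
    have := hC (g⁻¹ • x)
    simpa [smul_inv_smul] using this
  · rintro ⟨C, hC⟩
    exact ⟨C, fun x => hC _⟩

/-- Mean implies relative co-amenability (barycenter argument). -/
theorem of_mean {G : Type u} [Group G] (G₁ G₂ : Subgroup G)
    (m : MeanOn (G ⧸ G₁))
    (hm : ∀ (g : G₂) (f : (G ⧸ G₁) → ℝ), Bdd f →
      m.toFun (fun x => f ((g : G) • x)) = m.toFun f) :
    RelCoAmenable G G₁ G₂ := by
  intro E _ _ _ _ _ _ _ K hK hconv act hone hmul hcont haff hfix
  obtain ⟨x₀, hx₀⟩ := hfix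
  haveI : CompactSpace K := isCompact_iff_compactSpace.mp hK
  classical
  -- the orbit map
  let φ : G ⧸ G₁ → K := fun q => Quotient.liftOn' q (fun g => act g x₀) (fun a b hab => by
    have h1 : a⁻¹ * b ∈ G₁ := QuotientGroup.leftRel_apply.mp hab
    have h2 : act b x₀ = act a (act (a⁻¹ * b) x₀) := by
      rw [← hmul]; congr 1; group
    show act a x₀ = act b x₀
    rw [h2, hx₀ _ h1])
  have hφmk : ∀ g : G, φ (QuotientGroup.mk g) = act g x₀ := fun g => rfl
  have hφsmul : ∀ (h : G) (q : G ⧸ G₁), φ (h • q) = act h (φ q) := by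
    intro h q
    refine Quotient.inductionOn' q fun g => ?_
    show φ (h • (QuotientGroup.mk g)) = act h (φ (QuotientGroup.mk g))
    rw [MulAction.Quotient.smul_mk, hφmk, hφmk, smul_eq_mul, hmul]
  -- boundedness of continuous functions composed with φ
  have hbdd : ∀ u : K → ℝ, Continuous u → Bdd (fun q => u (φ q)) := by
    intro u hu
    obtain ⟨z, -, hz⟩ := isCompact_univ.exists_isMaxOn ⟨x₀, Set.mem_univ x₀⟩
      ((continuous_abs.comp hu).continuousOn)
    exact ⟨|u z|, fun q => hz (Set.mem_univ (φ q))⟩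
  let val : (E →L[ℝ] ℝ) × G → ℝ := fun p => m.toFun (fun q => p.1 (act p.2 (φ q)))
  let Z : (E →L[ℝ] ℝ) × G → Set K := fun p => {k | p.1 (act p.2 k) = val p}
  have hucont : ∀ p : (E →L[ℝ] ℝ) × G, Continuous (fun k : K => p.1 ((act p.2 k : E))) :=
    fun p => p.1.continuous.comp (continuous_subtype_val.comp (hcont p.2))
  have hZc : ∀ p, IsClosed (Z p) := fun p => isClosed_eq (hucont p) continuous_const
  have hFIP : ∀ t : Finset ((E →L[ℝ] ℝ) × G), (Set.univ ∩ ⋂ p ∈ t, Z p).Nonempty := by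
    intro t
    let A : K → (↥t → ℝ) := fun k i => i.1.1 ((act i.1.2 k : E))
    have hAcont : Continuous A := continuous_pi fun i => hucont i
    have hArange : IsClosed (Set.range A) := (isCompact_range hAcont).isClosed
    have hAconv : Convex ℝ (Set.range A) := by
      rintro p ⟨x, rfl⟩ q ⟨y, rfl⟩ a b ha hb hab
      have hb' : b = 1 - a := by linarith
      subst hb'
      have ha1 : a ≤ 1 := by linarith
      refine ⟨⟨a • (x : E) + (1 - a) • (y : E),
        hconv x.2 y.2 ha (by linarith) (by ring)⟩, ?_⟩
      funext i
      have hi := haff i.1.2 x y a ha ha1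
      show i.1.1 ((act i.1.2 _ : E)) = _
      rw [hi]
      simp [A, smul_eq_mul]
    have hv : (fun i : ↥t => val i.1) ∈ Set.range A := by
      by_contra hv
      obtain ⟨f, u, hfA, hfv⟩ := geometric_hahn_banach_closed_point hAconv hArange hv
      let c : ↥t → ℝ := fun i => f (fun j => if i = j then 1 else 0)
      have hexp : ∀ y : ↥t → ℝ, f y = ∑ i, y i * c i := by
        intro y
        have := LinearMap.pi_apply_eq_sum_univ (f : (↥t → ℝ) →ₗ[ℝ] ℝ) y
        simpa [smul_eq_mul] using this
      let sfun : ↥t → (G ⧸ G₁) → ℝ :=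
        fun i q => i.1.1 ((act i.1.2 (φ q) : E))
      have hsbdd : ∀ i, Bdd (sfun i) := fun i => hbdd _ (hucont i)
      have htermbdd : ∀ i : ↥t, Bdd (fun q => sfun i q * c i) := by
        intro i
        have := bddMulConst (hsbdd i) (c i)
        simpa [mul_comm] using this
      have hmF : m.toFun (fun q => ∑ i, sfun i q * c i)
          = ∑ i, val i.1 * c i := by
        rw [mean_sum m Finset.univ (fun i q => sfun i q * c i) (fun i _ => htermbdd i)]
        refine Finset.sum_congr rfl fun i _ => ?_
        have h1 : (fun q => sfun i q * c i) = fun q => c i * sfun i q := by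
          funext q; ring
        rw [h1, mean_smul m (c i) (hsbdd i)]
        exact mul_comm _ _
      have hFq : ∀ q, (∑ i, sfun i q * c i) = f (A (φ q)) := by
        intro q
        rw [hexp (A (φ q))]
      have hSbdd : Bdd (fun q => ∑ i, sfun i q * c i) :=
        bdd_sum Finset.univ (fun i q => sfun i q * c i) (fun i _ => htermbdd i)
      have hle : m.toFun (fun q => ∑ i, sfun i q * c i) ≤ u := by
        refine mean_le_const m hSbdd fun q => ?_
        rw [hFq q]
        exact le_of_lt (hfA _ ⟨φ q, rfl⟩)
      rw [hmF] at hle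
      rw [hexp (fun i : ↥t => val i.1)] at hfv
      linarith
    obtain ⟨k, hk⟩ := hv
    refine ⟨k, Set.mem_inter (Set.mem_univ k) ?_⟩
    refine Set.mem_iInter₂.mpr fun p hp => ?_
    exact congrFun hk ⟨p, hp⟩
  have hinter : (Set.univ ∩ ⋂ p, Z p).Nonempty := by
    by_contra hne
    rw [Set.not_nonempty_iff_eq_empty] at hne
    obtain ⟨t, ht⟩ := isCompact_univ.elim_finite_subfamily_closed Z hZc hne
    exact absurd ht (Set.nonempty_iff_ne_empty.mp (hFIP t))
  obtain ⟨b, -, hb⟩ := hinter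
  rw [Set.mem_iInter] at hb
  refine ⟨b, fun h hh => ?_⟩
  have key : ∀ ℓ : E →L[ℝ] ℝ, ℓ ((act h b : E)) = ℓ (b : E) := by
    intro ℓ
    have h1 : ℓ ((act h b : E)) = val (ℓ, h) := hb (ℓ, h)
    have h2 : ℓ ((act 1 b : E)) = val (ℓ, 1) := hb (ℓ, 1)
    have hbb : Bdd (fun q => ℓ ((φ q : E))) :=
      hbdd (fun k : K => ℓ (k : E)) (ℓ.continuous.comp continuous_subtype_val)
    have e1 : val (ℓ, h) = m.toFun (fun q => ℓ ((φ q : E))) := by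
      show m.toFun (fun q => ℓ ((act h (φ q) : E))) = _
      have heq : (fun q => ℓ ((act h (φ q) : E)))
          = fun q => (fun q' => ℓ ((φ q' : E))) ((h : G) • q) := by
        funext q; rw [← hφsmul]
      rw [heq]
      exact hm ⟨h, hh⟩ _ hbb
    have e2 : val (ℓ, 1) = m.toFun (fun q => ℓ ((φ q : E))) := by
      show m.toFun (fun q => ℓ ((act 1 (φ q) : E))) = _
      simp only [hone]
    rw [h1, e1, ← e2, ← h2, hone]
  apply Subtype.ext
  by_contra hne
  obtain ⟨f, hf⟩ := SeparatingDual.exists_separating_of_ne (R := ℝ) hne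
  exact hf (key f)

section Forward

/-- The set of (restricted) means on `ℓ∞(X)`, inside the space of all functionals. -/
def meanSet (X : Type*) : Set ((X → ℝ) → ℝ) :=
  {μ | (∀ f, ¬ Bdd f → μ f = 0) ∧
       (∀ f g, Bdd f → Bdd g → μ (f + g) = μ f + μ g) ∧
       (∀ (c : ℝ) (f : X → ℝ), Bdd f → μ (c • f) = c * μ f) ∧
       (∀ f g, Bdd f → Bdd g → (∀ x, f x ≤ g x) → μ f ≤ μ g) ∧
       μ (fun _ => 1) = 1}

open Classical in
/-- A bound for a function: a witness if bounded, `0` otherwise. -/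
noncomputable def bnd {X : Type*} (f : X → ℝ) : ℝ :=
  if h : Bdd f then Classical.choose h else 0

lemma bnd_spec {X : Type*} {f : X → ℝ} (h : Bdd f) : ∀ x, |f x| ≤ bnd f := by
  rw [bnd, dif_pos h]
  exact Classical.choose_spec h

lemma meanSet_const {X : Type*} {μ : (X → ℝ) → ℝ} (hμ : μ ∈ meanSet X) (c : ℝ) :
    μ (fun _ => c) = c := by
  obtain ⟨-, -, hsmul, -, hone⟩ := hμ
  have h := hsmul c (fun _ => 1) (bdd_const 1)
  have he : (c • fun _ : X => (1:ℝ)) = fun _ : X => c := by funext x; simp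
  rw [he] at h
  rw [h, hone, mul_one]

lemma meanSet_mem_Icc {X : Type*} {μ : (X → ℝ) → ℝ} (hμ : μ ∈ meanSet X) (f : X → ℝ) :
    μ f ∈ Set.Icc (-(bnd f)) (bnd f) := by
  by_cases hf : Bdd f
  · have hub : μ f ≤ bnd f := by
      have := hμ.2.2.2.1 f (fun _ => bnd f) hf (bdd_const _)
        (fun x => (abs_le.mp (bnd_spec hf x)).2)
      rwa [meanSet_const hμ] at this
    have hlb : -(bnd f) ≤ μ f := by
      have := hμ.2.2.2.1 (fun _ => -(bnd f)) f (bdd_const _) hf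
        (fun x => (abs_le.mp (bnd_spec hf x)).1)
      rwa [meanSet_const hμ] at this
    exact ⟨hlb, hub⟩
  · rw [hμ.1 f hf]
    rw [bnd, dif_neg hf]
    simp

lemma meanSet_isClosed (X : Type*) : IsClosed (meanSet X) := by
  have h1 : IsClosed {μ : (X → ℝ) → ℝ | ∀ f, ¬ Bdd f → μ f = 0} := by
    rw [Set.setOf_forall]
    refine isClosed_iInter fun f => ?_
    by_cases hf : Bdd f
    · simp [hf]
    · simpa [hf] using isClosed_eq (continuous_apply f) continuous_const
  have h2 : IsClosed {μ : (X → ℝ) → ℝ | ∀ f g, Bdd f → Bdd g → μ (f + g) = μ f + μ g} := by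
    rw [Set.setOf_forall]
    refine isClosed_iInter fun f => ?_
    rw [Set.setOf_forall]
    refine isClosed_iInter fun g => ?_
    by_cases hf : Bdd f
    · by_cases hg : Bdd g
      · simpa [hf, hg] using
          isClosed_eq (continuous_apply (f + g)) ((continuous_apply f).add (continuous_apply g))
      · simp [hg]
    · simp [hf]
  have h3 : IsClosed {μ : (X → ℝ) → ℝ | ∀ (c : ℝ) (f : X → ℝ), Bdd f → μ (c • f) = c * μ f} := by
    rw [Set.setOf_forall]
    refine isClosed_iInter fun c => ?_
    rw [Set.setOf_forall]
    refine isClosed_iInter fun f => ?_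
    by_cases hf : Bdd f
    · simpa [hf] using
        isClosed_eq (continuous_apply (c • f)) ((continuous_apply f).const_smul c)
    · simp [hf]
  have h4 : IsClosed {μ : (X → ℝ) → ℝ |
      ∀ f g, Bdd f → Bdd g → (∀ x, f x ≤ g x) → μ f ≤ μ g} := by
    rw [Set.setOf_forall]
    refine isClosed_iInter fun f => ?_
    rw [Set.setOf_forall]
    refine isClosed_iInter fun g => ?_
    by_cases hf : Bdd f
    · by_cases hg : Bdd g
      · by_cases hfg : ∀ x, f x ≤ g x
        · simpa [hf, hg, hfg] using isClosed_le (continuous_apply f) (continuous_apply g)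
        · simp [hfg]
      · simp [hg]
    · simp [hf]
  have h5 : IsClosed {μ : (X → ℝ) → ℝ | μ (fun _ => 1) = 1} :=
    isClosed_eq (continuous_apply _) continuous_const
  have : meanSet X = {μ : (X → ℝ) → ℝ | ∀ f, ¬ Bdd f → μ f = 0}
      ∩ ({μ | ∀ f g, Bdd f → Bdd g → μ (f + g) = μ f + μ g}
      ∩ ({μ | ∀ (c : ℝ) (f : X → ℝ), Bdd f → μ (c • f) = c * μ f}
      ∩ ({μ | ∀ f g, Bdd f → Bdd g → (∀ x, f x ≤ g x) → μ f ≤ μ g}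
      ∩ {μ | μ (fun _ => 1) = 1}))) := rfl
  rw [this]
  exact h1.inter (h2.inter (h3.inter (h4.inter h5)))

lemma meanSet_isCompact (X : Type*) : IsCompact (meanSet X) := by
  refine IsCompact.of_isClosed_subset
    (isCompact_univ_pi (fun f : X → ℝ => isCompact_Icc (a := -(bnd f)) (b := bnd f)))
    (meanSet_isClosed X) ?_
  intro μ hμ
  exact fun f _ => meanSet_mem_Icc hμ f

lemma meanSet_convex (X : Type*) : Convex ℝ (meanSet X) := by
  rintro μ hμ ν hν a b ha hb hab
  have happ : ∀ f, (a • μ + b • ν) f = a * μ f + b * ν f := fun f => rfl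
  refine ⟨?_, ?_, ?_, ?_, ?_⟩
  · intro f hf
    rw [happ, hμ.1 f hf, hν.1 f hf]
    ring
  · intro f g hf hg
    rw [happ, happ, happ, hμ.2.1 f g hf hg, hν.2.1 f g hf hg]
    ring
  · intro c f hf
    rw [happ, happ, hμ.2.2.1 c f hf, hν.2.2.1 c f hf]
    ring
  · intro f g hf hg hfg
    rw [happ, happ]
    have h1 := hμ.2.2.2.1 f g hf hg hfg
    have h2 := hν.2.2.2.1 f g hf hg hfg
    have := add_le_add (mul_le_mul_of_nonneg_left h1 ha) (mul_le_mul_of_nonneg_left h2 hb)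
    exact this
  · rw [happ, hμ.2.2.2.2, hν.2.2.2.2]
    linarith

end Forward

theorem to_mean {G : Type u} [Group G] (G₁ G₂ : Subgroup G) (h : RelCoAmenable G G₁ G₂) :
    ∃ m : MeanOn (G ⧸ G₁), ∀ (g : G₂) (f : (G ⧸ G₁) → ℝ), Bdd f →
      m.toFun (fun x => f ((g : G) • x)) = m.toFun f := by
  classical
  let act : G → meanSet (G ⧸ G₁) → meanSet (G ⧸ G₁) := fun g μ =>
    ⟨fun f => μ.1 (fun x => f (g • x)), by
      obtain ⟨hz, hadd, hsmul, hmono, hone1⟩ := μ.2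
      refine ⟨?_, ?_, ?_, ?_, ?_⟩
      · intro f hf
        exact hz _ (fun hb => hf ((bdd_comp_smul g).mp hb))
      · intro f f' hf hf'
        show μ.1 (fun x => (f + f') (g • x)) = _
        have he : (fun x => (f + f') (g • x))
            = (fun x => f (g • x)) + (fun x => f' (g • x)) := rfl
        rw [he]
        exact hadd _ _ ((bdd_comp_smul g).mpr hf) ((bdd_comp_smul g).mpr hf')
      · intro c f hf
        show μ.1 (fun x => (c • f) (g • x)) = _
        have he : (fun x => (c • f) (g • x)) = c • (fun x => f (g • x)) := rfl
        rw [he]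
        exact hsmul c _ ((bdd_comp_smul g).mpr hf)
      · intro f f' hf hf' hff'
        exact hmono _ _ ((bdd_comp_smul g).mpr hf) ((bdd_comp_smul g).mpr hf')
          (fun x => hff' (g • x))
      · exact hone1⟩
  have hone : ∀ μ, act 1 μ = μ := by
    intro μ
    apply Subtype.ext
    funext f
    exact congrArg μ.1 (funext fun x => by rw [one_smul])
  have hmul : ∀ g g' μ, act (g * g') μ = act g (act g' μ) := by
    intro g g' μ
    apply Subtype.ext
    funext f
    exact congrArg μ.1 (funext fun x => by rw [mul_smul])
  have hcont : ∀ g, Continuous (act g) := by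
    intro g
    apply Continuous.subtype_mk
    exact continuous_pi fun f => (continuous_apply _).comp continuous_subtype_val
  obtain ⟨μ, hμ⟩ := h ((G ⧸ G₁ → ℝ) → ℝ) (meanSet (G ⧸ G₁)) (meanSet_isCompact _)
    (meanSet_convex _) act hone hmul hcont
    (by
      intro g x y t ht0 ht1
      funext f
      show (t • x.1 + (1 - t) • y.1) (fun z => f (g • z)) = _
      rfl)
    (by
      refine ⟨⟨fun f => if Bdd f then f ((1 : G) : G ⧸ G₁) else 0, ?_, ?_, ?_, ?_, ?_⟩, ?_⟩
      · intro f hf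
        exact if_neg hf
      · intro f g hf hg
        beta_reduce
        rw [if_pos hf, if_pos hg, if_pos]
        · rfl
        · exact bddAdd hf hg
      · intro c f hf
        beta_reduce
        rw [if_pos hf, if_pos]
        · rfl
        · exact bddMulConst hf c
      · intro f g hf hg hfg
        beta_reduce
        rw [if_pos hf, if_pos hg]
        exact hfg _
      · exact if_pos (bdd_const 1)
      · intro k hk
        apply Subtype.ext
        funext f
        show (if Bdd (fun x => f (k • x)) then (fun x => f (k • x)) ((1 : G) : G ⧸ G₁) else 0)
          = (if Bdd f then f ((1 : G) : G ⧸ G₁) else 0)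
        have hpt : k • ((1 : G) : G ⧸ G₁) = ((1 : G) : G ⧸ G₁) := by
          rw [MulAction.Quotient.smul_mk, smul_eq_mul, mul_one]
          exact (QuotientGroup.eq).mpr (by simpa using inv_mem hk)
        refine if_congr (bdd_comp_smul k) ?_ rfl
        show f (k • ((1 : G) : G ⧸ G₁)) = f ((1 : G) : G ⧸ G₁)
        rw [hpt])
  refine ⟨⟨μ.1, μ.2.2.1, μ.2.2.2.1, μ.2.2.2.2.1, μ.2.2.2.2.2⟩, ?_⟩
  intro g f _
  exact congrArg (fun ν : meanSet (G ⧸ G₁) => ν.1 f) (hμ (g : G) g.2)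

end RelAux

/-- For subgroups `G₁, G₂` of a discrete group `G`, `G₁` is
co-amenable to `G₂` relative to `G` (every convex compact `G`-space with a
`G₁`-fixed point has a `G₂`-fixed point) if and only if the `G₂`-action on `G/G₁`
admits an invariant mean. -/

theorem relCoAmenable_iff_invariant_mean (G : Type u) [Group G] (G₁ G₂ : Subgroup G) :
    RelCoAmenable G G₁ G₂ ↔
    ∃ m : MeanOn (G ⧸ G₁), ∀ (g : G₂) (f : (G ⧸ G₁) → ℝ), Bdd f →
      m.toFun (fun x => f ((g : G) • x)) = m.toFun f := by
  constructor
  · exact RelAux.to_mean G₁ G₂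
  · rintro ⟨m, hm⟩
    exact RelAux.of_mean G₁ G₂ m hm
end
end

section
/- Let Γ < G be a countable subgroup of a group G which is co-amenable in G. Then for every countable subgroup Λ₁ < G containing Γ there exists a countable subgroup Λ < G containing Λ₁ such that Γ is co-amenable in Λ. Moreover, if 𝓗 is a family of countable subgroups of G that is cofinal (every countable subgroup of G is contained in some member of 𝓗) and closed under countable increasing unions, then Λ can be chosen in 𝓗. -/
open Matrix Filter Topology MeasureTheory

noncomputable section

/-- The group of homeomorphisms of a topological space, under composition. -/
instance Homeomorph.instGroup_PP {X : Type*} [TopologicalSpace X] : Group (X ≃ₜ X) where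
  mul a b := b.trans a
  one := Homeomorph.refl X
  inv := Homeomorph.symm
  mul_assoc a b c := Homeomorph.ext fun _ => rfl
  one_mul a := Homeomorph.ext fun _ => rfl
  mul_one a := Homeomorph.ext fun _ => rfl
  inv_mul_cancel a := Homeomorph.ext fun x => a.symm_apply_apply x

@[simp] lemma Homeomorph.mul_apply_PP {X : Type*} [TopologicalSpace X]
    (a b : X ≃ₜ X) (x : X) : (a * b) x = a (b x) := rfl

open Finsupp

namespace CoAux

variable {X : Type*} {Y : Type*}

/-- ℓ¹ norm of a finitely supported real function. -/
def l1 (v : X →₀ ℝ) : ℝ := v.sum fun _ a => |a|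

lemma l1_eq_sum {s : Finset X} {v : X →₀ ℝ} (h : v.support ⊆ s) :
    l1 v = ∑ x ∈ s, |v x| := by
  rw [l1, Finsupp.sum]
  exact Finset.sum_subset h (fun x _ hx => by
    simp [Finsupp.notMem_support_iff.1 hx])

lemma l1_nonneg (v : X →₀ ℝ) : 0 ≤ l1 v :=
  Finset.sum_nonneg fun _ _ => abs_nonneg _

noncomputable instance : NormedAddCommGroup (X →₀ ℝ) :=
  AddGroupNorm.toNormedAddCommGroup
    { toFun := l1
      map_zero' := by simp [l1]
      add_le' := by
        intro a b
        classical
        have ha : a.support ⊆ a.support ∪ b.support := Finset.subset_union_left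
        have hb : b.support ⊆ a.support ∪ b.support := Finset.subset_union_right
        have hab : (a + b).support ⊆ a.support ∪ b.support := Finsupp.support_add
        rw [l1_eq_sum hab, l1_eq_sum ha, l1_eq_sum hb, ← Finset.sum_add_distrib]
        exact Finset.sum_le_sum fun x _ => by
          simpa using abs_add_le (a x) (b x)
      neg' := by
        intro a
        have : (-a).support = a.support := Finsupp.support_neg a
        rw [l1, l1, Finsupp.sum, Finsupp.sum, this]
        exact Finset.sum_congr rfl fun x _ => by simp
      eq_zero_of_map_eq_zero' := by
        intro a ha
        ext x
        by_cases hx : x ∈ a.support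
        · have := (Finset.sum_eq_zero_iff_of_nonneg
            (fun y _ => abs_nonneg (a y))).1 ha x hx
          simpa using this
        · simpa using Finsupp.notMem_support_iff.1 hx }

lemma norm_def (v : X →₀ ℝ) : ‖v‖ = l1 v := rfl

noncomputable instance : NormedSpace ℝ (X →₀ ℝ) where
  norm_smul_le := by
    intro c v
    have hs : (c • v).support ⊆ v.support := Finsupp.support_smul
    rw [norm_def, norm_def, l1_eq_sum hs, l1, Finsupp.sum, Finset.mul_sum]
    refine le_of_eq (Finset.sum_congr rfl fun x _ => ?_)
    simp [abs_mul]

lemma norm_single (x : X) : ‖Finsupp.single x (1:ℝ)‖ = 1 := by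
  rw [norm_def, l1, Finsupp.sum_single_index] <;> simp

lemma l1_mapDomain_inj {f : X → Y} (hf : Function.Injective f) (u : X →₀ ℝ) :
    l1 (mapDomain f u) = l1 u :=
  Finsupp.sum_mapDomain_index_inj (h := fun _ a => |a|) hf

lemma mapDomain_nonneg {f : X → Y} {v : X →₀ ℝ} (h : ∀ a, 0 ≤ v a) (b : Y) :
    0 ≤ mapDomain f v b := by
  classical
  rw [Finsupp.mapDomain, Finsupp.sum_apply]
  refine Finset.sum_nonneg fun x _ => ?_
  simp only [Finsupp.single_apply]
  split <;> simp [h x]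

lemma sum_mapDomain (f : X → Y) (u : X →₀ ℝ) :
    (mapDomain f u).sum (fun _ a => a) = u.sum (fun _ a => a) :=
  Finsupp.sum_mapDomain_index (fun _ => rfl) (fun _ _ _ => rfl)

lemma mapDomain_sub (f : X → Y) (u v : X →₀ ℝ) :
    mapDomain f (u - v) = mapDomain f u - mapDomain f v :=
  (Finsupp.mapDomain.addMonoidHom f).map_sub u v

end CoAux

open Filter Topology Finsupp

namespace CoAux
open PP

variable {X : Type*}

lemma bdd_const (c : ℝ) : Bdd (fun _ : X => c) := ⟨|c|, fun _ => le_rfl⟩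

lemma bdd_sub {f g : X → ℝ} (hf : Bdd f) (hg : Bdd g) :
    Bdd (fun x => f x - g x) := by
  obtain ⟨C, hC⟩ := hf; obtain ⟨D, hD⟩ := hg
  exact ⟨C + D, fun x => (abs_sub (f x) (g x)).trans (add_le_add (hC x) (hD x))⟩

lemma bdd_add {f g : X → ℝ} (hf : Bdd f) (hg : Bdd g) :
    Bdd (fun x => f x + g x) := by
  obtain ⟨C, hC⟩ := hf; obtain ⟨D, hD⟩ := hg
  exact ⟨C + D, fun x => (abs_add_le (f x) (g x)).trans (add_le_add (hC x) (hD x))⟩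

lemma bdd_sum {ι : Type*} (s : Finset ι) (F : ι → X → ℝ) (h : ∀ i ∈ s, Bdd (F i)) :
    Bdd (fun x => ∑ i ∈ s, F i x) := by
  classical
  induction s using Finset.induction_on with
  | empty => simpa using bdd_const 0
  | @insert a s ha ih =>
    have h1 : Bdd (fun x => F a x + ∑ i ∈ s, F i x) :=
      bdd_add (h a (Finset.mem_insert_self a s))
        (ih fun i hi => h i (Finset.mem_insert_of_mem hi))
    simpa [Finset.sum_insert ha] using h1

lemma mean_zero (m : MeanOn X) : m.toFun (fun _ => 0) = 0 := by
  have e : (0:ℝ) • (fun _ : X => (1:ℝ)) = fun _ => (0:ℝ) := by funext x; simp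
  have := m.smul' 0 (fun _ => 1) (bdd_const 1)
  rw [e] at this
  simpa using this

lemma mean_const (m : MeanOn X) (c : ℝ) : m.toFun (fun _ => c) = c := by
  have e : c • (fun _ : X => (1:ℝ)) = fun _ => c := by funext x; simp
  have := m.smul' c (fun _ => 1) (bdd_const 1)
  rw [e] at this
  rw [this, m.one', mul_one]

lemma mean_sub (m : MeanOn X) {f g : X → ℝ} (hf : Bdd f) (hg : Bdd g) :
    m.toFun (fun x => f x - g x) = m.toFun f - m.toFun g := by
  have hng : Bdd (fun x => -g x) := by
    obtain ⟨D, hD⟩ := hg; exact ⟨D, fun x => by simpa using hD x⟩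
  have h1 : m.toFun (fun x => -g x) = - m.toFun g := by
    have := m.smul' (-1) g hg
    have e : (-1:ℝ) • g = fun x => -g x := by funext x; simp
    rw [e] at this; rw [this]; ring
  have := m.add' f (fun x => -g x) hf hng
  have e : f + (fun x => -g x) = fun x => f x - g x := by
    funext x; simp [sub_eq_add_neg]
  rw [e] at this
  rw [this, h1]; ring

lemma mean_sum (m : MeanOn X) {ι : Type*} (s : Finset ι) (F : ι → X → ℝ)
    (h : ∀ i ∈ s, Bdd (F i)) :
    m.toFun (fun x => ∑ i ∈ s, F i x) = ∑ i ∈ s, m.toFun (F i) := by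
  classical
  induction s using Finset.induction_on with
  | empty => simpa using mean_zero m
  | @insert a s ha ih =>
    have hBs : Bdd (fun x => ∑ i ∈ s, F i x) :=
      bdd_sum s F fun i hi => h i (Finset.mem_insert_of_mem hi)
    have := m.add' (F a) (fun x => ∑ i ∈ s, F i x)
      (h a (Finset.mem_insert_self a s)) hBs
    have e : F a + (fun x => ∑ i ∈ s, F i x) = fun x => ∑ i ∈ insert a s, F i x := by
      funext x; simp [Finset.sum_insert ha]
    rw [e] at this
    rw [this, ih fun i hi => h i (Finset.mem_insert_of_mem hi), Finset.sum_insert ha]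

lemma sum_id_add (v w : X →₀ ℝ) :
    (v + w).sum (fun _ c => c) = v.sum (fun _ c => c) + w.sum (fun _ c => c) :=
  Finsupp.sum_add_index' (fun _ => rfl) (fun _ _ _ => rfl)

lemma sum_id_smul (a : ℝ) (v : X →₀ ℝ) :
    (a • v).sum (fun _ c => c) = a * v.sum (fun _ c => c) := by
  rw [Finsupp.sum_smul_index (fun _ => rfl), Finsupp.mul_sum]

/-- Day's argument: an invariant mean yields almost-invariant finitely
supported probability vectors. -/
theorem exists_almost_invariant {H : Type*} [Group H] [MulAction H X]
    (m : MeanOn X)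
    (hm : ∀ (g : H) (f : X → ℝ), Bdd f → m.toFun (fun x => f (g • x)) = m.toFun f)
    (F : Finset H) {ε : ℝ} (hε : 0 < ε) :
    ∃ v : X →₀ ℝ, (∀ x, 0 ≤ v x) ∧ v.sum (fun _ a => a) = 1 ∧
      ∀ g ∈ F, l1 (mapDomain (g • ·) v - v) < ε := by
  classical
  set P : Set (X →₀ ℝ) := {v | (∀ x, 0 ≤ v x) ∧ v.sum (fun _ a => a) = 1} with hP
  set T : (X →₀ ℝ) → (↥F → (X →₀ ℝ)) :=
    fun v g => mapDomain (g.1 • ·) v - v with hT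
  by_cases h0 : (0 : ↥F → (X →₀ ℝ)) ∈ closure (T '' P)
  · obtain ⟨b, hbC, hb⟩ := Metric.mem_closure_iff.1 h0 ε hε
    obtain ⟨v, hvP, rfl⟩ := hbC
    refine ⟨v, hvP.1, hvP.2, fun g hg => ?_⟩
    calc l1 (mapDomain (g • ·) v - v) = ‖T v ⟨g, hg⟩‖ := rfl
      _ ≤ ‖T v‖ := norm_le_pi_norm _ _
      _ < ε := by rwa [dist_zero_left] at hb
  · exfalso
    have hTlin : ∀ (a b : ℝ) (v w : X →₀ ℝ), T (a • v + b • w) = a • T v + b • T w := by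
      intro a b v w
      funext g
      simp only [hT, Pi.add_apply, Pi.smul_apply]
      rw [Finsupp.mapDomain_add, Finsupp.mapDomain_smul, Finsupp.mapDomain_smul,
        smul_sub, smul_sub]
      abel
    have hC : Convex ℝ (T '' P) := by
      rintro _ ⟨v, hv, rfl⟩ _ ⟨w, hw, rfl⟩ a b ha hb hab
      refine ⟨a • v + b • w, ⟨?_, ?_⟩, hTlin a b v w⟩
      · intro x
        simp only [Finsupp.coe_add, Pi.add_apply, Finsupp.coe_smul, Pi.smul_apply,
          smul_eq_mul]
        exact add_nonneg (mul_nonneg ha (hv.1 x)) (mul_nonneg hb (hw.1 x))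
      · rw [sum_id_add, sum_id_smul, sum_id_smul, hv.2, hw.2]
        simpa using hab
    obtain ⟨f, u, hfu, hu0⟩ :=
      geometric_hahn_banach_closed_point hC.closure isClosed_closure h0
    rw [map_zero] at hu0
    set φ : ↥F → X → ℝ := fun g x => f (Pi.single (M := fun _ => X →₀ ℝ) g (Finsupp.single x 1)) with hφ
    have hφb : ∀ (g : ↥F) (x : X), |φ g x| ≤ ‖f‖ := by
      intro g x
      have h1 : ‖(Pi.single g (Finsupp.single x (1:ℝ)) : ↥F → X →₀ ℝ)‖ ≤ 1 := by
        refine (pi_norm_le_iff_of_nonneg (by norm_num)).2 fun i => ?_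
        by_cases hig : i = g
        · subst hig; rw [Pi.single_eq_same, norm_single]
        · rw [Pi.single_eq_of_ne hig, norm_zero]; norm_num
      calc |φ g x| = ‖f (Pi.single (M := fun _ => X →₀ ℝ) g (Finsupp.single x (1:ℝ)))‖ := (Real.norm_eq_abs _).symm
        _ ≤ ‖f‖ * ‖(Pi.single g (Finsupp.single x (1:ℝ)) : ↥F → X →₀ ℝ)‖ := f.le_opNorm _
        _ ≤ ‖f‖ * 1 := mul_le_mul_of_nonneg_left h1 (norm_nonneg f)
        _ = ‖f‖ := mul_one _
    have hδP : ∀ x : X, (Finsupp.single x (1:ℝ)) ∈ P := by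
      intro x
      refine ⟨fun y => ?_, ?_⟩
      · rw [Finsupp.single_apply]; split <;> norm_num
      · rw [Finsupp.sum_single_index rfl]
    have key : ∀ x : X, (∑ g : ↥F, (φ g (g.1 • x) - φ g x)) < u := by
      intro x
      have hmem : T (Finsupp.single x 1) ∈ closure (T '' P) :=
        subset_closure ⟨_, hδP x, rfl⟩
      have hlt := hfu _ hmem
      have e2 : f (T (Finsupp.single x 1)) = ∑ g : ↥F, (φ g (g.1 • x) - φ g x) := by
        conv_lhs => rw [← Finset.univ_sum_single (T (Finsupp.single x 1))]
        rw [map_sum]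
        refine Finset.sum_congr rfl fun g _ => ?_
        have e3 : T (Finsupp.single x 1) g
            = Finsupp.single (g.1 • x) 1 - Finsupp.single x 1 := by
          simp only [hT]; rw [Finsupp.mapDomain_single]
        rw [e3, Pi.single_sub, map_sub]
      rwa [e2] at hlt
    have hbddφ : ∀ g : ↥F, Bdd (φ g) := fun g => ⟨‖f‖, hφb g⟩
    have hbddφg : ∀ g : ↥F, Bdd (fun x => φ g (g.1 • x)) :=
      fun g => ⟨‖f‖, fun x => hφb g _⟩
    have hterm : ∀ g : ↥F, Bdd (fun x => φ g (g.1 • x) - φ g x) :=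
      fun g => bdd_sub (hbddφg g) (hbddφ g)
    have hmean0 : m.toFun (fun x => ∑ g : ↥F, (φ g (g.1 • x) - φ g x)) = 0 := by
      rw [mean_sum m Finset.univ _ (fun g _ => hterm g)]
      refine Finset.sum_eq_zero fun g _ => ?_
      rw [mean_sub m (hbddφg g) (hbddφ g), hm g.1 (φ g) (hbddφ g), sub_self]
    have hle : m.toFun (fun x => ∑ g : ↥F, (φ g (g.1 • x) - φ g x)) ≤ u := by
      calc m.toFun (fun x => ∑ g : ↥F, (φ g (g.1 • x) - φ g x))
          ≤ m.toFun (fun _ => u) :=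
            m.mono' _ _ (bdd_sum Finset.univ _ (fun g _ => hterm g)) (bdd_const u)
              (fun x => le_of_lt (key x))
        _ = u := mean_const m u
    linarith

end CoAux
namespace CoAux
open PP Filter Topology Finsupp

variable {X : Type*}

lemma l1_of_nonneg {v : X →₀ ℝ} (h : ∀ x, 0 ≤ v x) :
    l1 v = v.sum (fun _ a => a) :=
  Finsupp.sum_congr fun x _ => abs_of_nonneg (h x)

lemma pairing_abs_le {C : ℝ} (u : X →₀ ℝ) (f : X → ℝ) (hf : ∀ x, |f x| ≤ C) :
    |u.sum fun x a => a * f x| ≤ C * l1 u := by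
  calc |u.sum fun x a => a * f x| ≤ u.support.sum fun x => |u x * f x| :=
        Finset.abs_sum_le_sum_abs _ _
    _ ≤ u.support.sum fun x => |u x| * C := by
        refine Finset.sum_le_sum fun x _ => ?_
        rw [abs_mul]
        exact mul_le_mul_of_nonneg_left (hf x) (abs_nonneg _)
    _ = C * l1 u := by
        rw [l1, Finsupp.sum, ← Finset.sum_mul, mul_comm]

/-- Almost-invariant probability vectors yield an invariant mean. -/
theorem mean_of_almost_invariant {H : Type*} [Group H] [MulAction H X]
    (hv : ∀ (F : Finset H) (n : ℕ), ∃ v : X →₀ ℝ, (∀ x, 0 ≤ v x) ∧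
        v.sum (fun _ a => a) = 1 ∧
        ∀ g ∈ F, l1 (mapDomain (g • ·) v - v) < 1/(n+1)) :
    ∃ m : MeanOn X, ∀ (g : H) (f : X → ℝ), Bdd f →
      m.toFun (fun x => f (g • x)) = m.toFun f := by
  classical
  choose v hv1 hv2 hv3 using hv
  set ι := Finset H × ℕ with hι
  let U : Ultrafilter ι := Ultrafilter.of atTop
  have hU : (U : Filter ι) ≤ atTop := Ultrafilter.of_le _
  set pair : ι → (X → ℝ) → ℝ := fun i f => (v i.1 i.2).sum fun x a => a * f x with hpair
  have hl1 : ∀ i : ι, l1 (v i.1 i.2) = 1 := fun i => by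
    rw [l1_of_nonneg (hv1 i.1 i.2), hv2 i.1 i.2]
  have hpair_le : ∀ (i : ι) (f : X → ℝ) (C : ℝ), (∀ x, |f x| ≤ C) → |pair i f| ≤ C := by
    intro i f C hC
    have := pairing_abs_le (v i.1 i.2) f hC
    rwa [hl1 i, mul_one] at this
  have hlim : ∀ f : X → ℝ, Bdd f → ∃ L, Tendsto (fun i => pair i f) (U : Filter ι) (𝓝 L) := by
    rintro f ⟨C, hC⟩
    have hmem : ∀ i, pair i f ∈ Set.Icc (-C) C := fun i => abs_le.1 (hpair_le i f C hC)
    have hle : (Ultrafilter.map (fun i => pair i f) U : Filter ℝ) ≤ 𝓟 (Set.Icc (-C) C) := by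
      rw [Filter.le_principal_iff, Ultrafilter.mem_coe, Ultrafilter.mem_map]
      exact (Filter.univ_mem' hmem : _ ∈ (U : Filter ι))
    obtain ⟨L, -, hL⟩ := (isCompact_Icc (a := -C) (b := C)).ultrafilter_le_nhds _ hle
    exact ⟨L, by rw [Filter.Tendsto, ← Ultrafilter.coe_map]; exact hL⟩
  set M : (X → ℝ) → ℝ := fun f => limUnder (U : Filter ι) (fun i => pair i f) with hM
  have htend : ∀ f : X → ℝ, Bdd f → Tendsto (fun i => pair i f) (U : Filter ι) (𝓝 (M f)) := by
    intro f hf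
    obtain ⟨L, hL⟩ := hlim f hf
    have : M f = L := hL.limUnder_eq
    rw [this]; exact hL
  have hadd : ∀ f g : X → ℝ, Bdd f → Bdd g → M (f + g) = M f + M g := by
    intro f g hf hg
    have e : (fun i => pair i (f + g)) = fun i => pair i f + pair i g := by
      funext i
      simp only [hpair, Pi.add_apply, mul_add]
      exact Finsupp.sum_add
    have h1 : Tendsto (fun i => pair i (f + g)) (U : Filter ι) (𝓝 (M f + M g)) := by
      rw [e]; exact (htend f hf).add (htend g hg)
    exact h1.limUnder_eq
  have hsmul : ∀ (c : ℝ) (f : X → ℝ), Bdd f → M (c • f) = c * M f := by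
    intro c f hf
    have e : (fun i => pair i (c • f)) = fun i => c * pair i f := by
      funext i
      simp only [hpair, Pi.smul_apply, smul_eq_mul]
      rw [Finsupp.mul_sum]
      exact Finsupp.sum_congr fun x _ => by ring
    have h1 : Tendsto (fun i => pair i (c • f)) (U : Filter ι) (𝓝 (c * M f)) := by
      rw [e]; exact (htend f hf).const_mul c
    exact h1.limUnder_eq
  have hmono : ∀ f g : X → ℝ, Bdd f → Bdd g → (∀ x, f x ≤ g x) → M f ≤ M g := by
    intro f g hf hg hfg
    refine le_of_tendsto_of_tendsto' (htend f hf) (htend g hg) fun i => ?_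
    refine Finset.sum_le_sum fun x _ => ?_
    exact mul_le_mul_of_nonneg_left (hfg x) (hv1 i.1 i.2 x)
  have hone : M (fun _ => 1) = 1 := by
    have e : (fun i => pair i (fun _ => 1)) = fun _ => (1:ℝ) := by
      funext i
      simp only [hpair, mul_one]
      exact hv2 i.1 i.2
    have h1 : Tendsto (fun i => pair i (fun _ => (1:ℝ))) (U : Filter ι) (𝓝 1) := by
      rw [e]; exact tendsto_const_nhds
    exact h1.limUnder_eq
  refine ⟨⟨M, hadd, hsmul, hmono, hone⟩, ?_⟩
  intro g f hf
  obtain ⟨C0, hC0⟩ := hf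
  set C : ℝ := |C0| + 1 with hCdef
  have hC : ∀ x, |f x| ≤ C := fun x =>
    (hC0 x).trans ((le_abs_self C0).trans (by rw [hCdef]; linarith))
  have hCpos : 0 < C := by rw [hCdef]; positivity
  have e1 : ∀ i : ι,
      ((mapDomain (g • ·) (v i.1 i.2) - v i.1 i.2).sum fun x a => a * f x)
        = pair i (fun x => f (g • x)) - pair i f := by
    intro i
    rw [Finsupp.sum_sub_index (fun a b₁ b₂ => by ring)]
    congr 1
    exact Finsupp.sum_mapDomain_index (fun b => by simp) (fun b a₁ a₂ => by ring)
  have e2 : ∀ δ : ℝ, 0 < δ →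
      ∀ᶠ i in (U : Filter ι), |pair i (fun x => f (g • x)) - pair i f| < δ := by
    intro δ hδ
    obtain ⟨n, hn⟩ := exists_nat_gt (C / δ)
    have hev : ∀ᶠ i in (atTop : Filter ι), (({g} : Finset H), n) ≤ i :=
      Filter.eventually_ge_atTop _
    refine (hev.filter_mono hU).mono fun i hi => ?_
    have hgF : g ∈ i.1 := hi.1 (Finset.mem_singleton_self g)
    have hni : n ≤ i.2 := hi.2
    have h3 := hv3 i.1 i.2 g hgF
    have hn1 : (0:ℝ) < (n:ℝ) + 1 := by positivity
    have hi1 : (0:ℝ) < (i.2:ℝ) + 1 := by positivity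
    have hmono1 : (1:ℝ)/((i.2:ℝ)+1) ≤ 1/((n:ℝ)+1) := by
      apply one_div_le_one_div_of_le hn1
      have : (n:ℝ) ≤ (i.2:ℝ) := Nat.cast_le.2 hni
      linarith
    have hCn : C * (1/((n:ℝ)+1)) < δ := by
      rw [mul_one_div]
      rw [div_lt_iff₀ hn1]
      have h4 : C < (n:ℝ) * δ := by
        have := (div_lt_iff₀ hδ).1 hn
        linarith
      nlinarith
    calc |pair i (fun x => f (g • x)) - pair i f|
        = |(mapDomain (g • ·) (v i.1 i.2) - v i.1 i.2).sum fun x a => a * f x| := by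
          rw [e1 i]
      _ ≤ C * l1 (mapDomain (g • ·) (v i.1 i.2) - v i.1 i.2) := pairing_abs_le _ f hC
      _ < C * (1/((i.2:ℝ)+1)) := by
          exact (mul_lt_mul_iff_right₀ hCpos).2 h3
      _ ≤ C * (1/((n:ℝ)+1)) := by
          exact mul_le_mul_of_nonneg_left hmono1 (le_of_lt hCpos)
      _ < δ := hCn
  have h0 : Tendsto (fun i => pair i (fun x => f (g • x)) - pair i f)
      (U : Filter ι) (𝓝 0) := by
    rw [Metric.tendsto_nhds]
    intro δ hδ
    refine (e2 δ hδ).mono fun i hi => ?_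
    rwa [Real.dist_eq, sub_zero]
  have h1 : Tendsto (fun i => pair i (fun x => f (g • x))) (U : Filter ι) (𝓝 (M f)) := by
    have h2 := (htend f ⟨C, fun x => hC x⟩).add h0
    rw [add_zero] at h2
    convert h2 using 2 with i
    ring
  exact h1.limUnder_eq

end CoAux
namespace CoAux
open Finsupp

lemma countable_lists {G : Type*} {t : Set G} (ht : t.Countable) :
    {l : List G | ∀ x ∈ l, x ∈ t}.Countable := by
  haveI := ht.to_subtype
  have hsub : {l : List G | ∀ x ∈ l, x ∈ t} ⊆
      Set.range (List.map (Subtype.val : t → G)) := by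
    intro l hl
    refine ⟨l.pmap (fun x hx => ⟨x, hx⟩) hl, ?_⟩
    simp [List.map_pmap, List.pmap_eq_map]
  exact (Set.countable_range _).mono hsub

lemma countable_closure_subgroup {G : Type*} [Group G] {s : Set G} (hs : s.Countable) :
    ((Subgroup.closure s : Subgroup G) : Set G).Countable := by
  have hinv : (s⁻¹ : Set G).Countable := hs.preimage inv_injective
  have ht : (s ∪ s⁻¹ : Set G).Countable := hs.union hinv
  have hsub : ((Subgroup.closure s : Subgroup G) : Set G) ⊆
      List.prod '' {l : List G | ∀ x ∈ l, x ∈ s ∪ s⁻¹} := by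
    intro x hx
    have hx' : x ∈ Submonoid.closure (s ∪ s⁻¹) := by
      have : x ∈ (Subgroup.closure s).toSubmonoid := hx
      rwa [Subgroup.closure_toSubmonoid] at this
    rwa [← SetLike.mem_coe, Submonoid.closure_eq_image_prod] at hx'
  exact ((countable_lists ht).image _).mono hsub

lemma countable_finsets_subset {G : Type*} {K : Set G} (hK : K.Countable) :
    {F : Finset G | ↑F ⊆ K}.Countable := by
  have h1 : {t : Set G | t.Finite ∧ t ⊆ K}.Countable :=
    Set.countable_setOf_finite_subset hK
  have h2 : {F : Finset G | ↑F ⊆ K}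
      ⊆ (fun F : Finset G => (↑F : Set G)) ⁻¹' {t | t.Finite ∧ t ⊆ K} := by
    intro F hF
    exact ⟨F.finite_toSet, hF⟩
  exact (h1.preimage Finset.coe_injective).mono h2

end CoAux

open PP CoAux Finsupp


/-- Let `Γ` be a countable subgroup of `G`, co-amenable in `G`.
Then every countable `Λ₁` with `Γ ≤ Λ₁ ≤ G` is contained in a countable `Λ ≤ G`
in which `Γ` is co-amenable; moreover, given a cofinal family `𝓗` of countable
subgroups closed under countable increasing unions, `Λ` can be chosen in `𝓗`. -/
theorem coamenable_in_countable_intermediate (G : Type) [Group G]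
    (Γ : Subgroup G) (hΓc : Countable Γ) (hco : CoAmenableIn Γ) :
    (∀ Λ₁ : Subgroup G, Countable Λ₁ → Γ ≤ Λ₁ →
      ∃ Λ : Subgroup G, Countable Λ ∧ Λ₁ ≤ Λ ∧ CoAmenableIn (Γ.subgroupOf Λ)) ∧
    (∀ 𝓗 : Set (Subgroup G),
      (∀ H ∈ 𝓗, Countable H) →
      (∀ K : Subgroup G, Countable K → ∃ H ∈ 𝓗, K ≤ H) →
      (∀ c : ℕ → Subgroup G, (∀ n, c n ∈ 𝓗) → Monotone c → (⨆ n, c n) ∈ 𝓗) →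
      ∀ Λ₁ : Subgroup G, Countable Λ₁ → Γ ≤ Λ₁ →
        ∃ Λ ∈ 𝓗, Λ₁ ≤ Λ ∧ CoAmenableIn (Γ.subgroupOf Λ)) := by
  classical
  obtain ⟨m, hm⟩ := hco
  have step1 : ∀ (F : Finset G) (n : ℕ), ∃ w : G →₀ ℝ, (∀ x, 0 ≤ w x) ∧
      ((mapDomain (QuotientGroup.mk : G → G ⧸ Γ) w).sum fun _ a => a) = 1 ∧
      ∀ g ∈ F, l1 (mapDomain (g • ·) (mapDomain (QuotientGroup.mk : G → G ⧸ Γ) w)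
        - mapDomain (QuotientGroup.mk : G → G ⧸ Γ) w) < 1/(n+1) := by
    intro F n
    have hε : (0:ℝ) < 1/(n+1) := by positivity
    obtain ⟨v, hv1, hv2, hv3⟩ := exists_almost_invariant m hm F hε
    have hout : mapDomain (QuotientGroup.mk : G → G ⧸ Γ)
        (mapDomain Quotient.out v) = v := by
      rw [← Finsupp.mapDomain_comp]
      have e : ((QuotientGroup.mk : G → G ⧸ Γ) ∘ Quotient.out) = id := by
        funext q; exact QuotientGroup.out_eq' q
      rw [e, Finsupp.mapDomain_id]
    refine ⟨mapDomain Quotient.out v, fun x => CoAux.mapDomain_nonneg hv1 x, ?_, ?_⟩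
    · rw [hout]; exact hv2
    · intro g hg; rw [hout]; exact hv3 g hg
  choose W hW1 hW2 hW3 using step1
  have part2 : ∀ 𝓗 : Set (Subgroup G),
      (∀ H ∈ 𝓗, Countable H) →
      (∀ K : Subgroup G, Countable K → ∃ H ∈ 𝓗, K ≤ H) →
      (∀ c : ℕ → Subgroup G, (∀ n, c n ∈ 𝓗) → Monotone c → (⨆ n, c n) ∈ 𝓗) →
      ∀ Λ₁ : Subgroup G, Countable Λ₁ → Γ ≤ Λ₁ →
        ∃ Λ ∈ 𝓗, Λ₁ ≤ Λ ∧ CoAmenableIn (Γ.subgroupOf Λ) := by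
    intro 𝓗 h𝓗count h𝓗cof h𝓗union Λ₁ hΛ₁c hΓΛ₁
    have hnext : ∀ K : Subgroup G, Countable K → ∃ K' : Subgroup G,
        K' ∈ 𝓗 ∧ K ≤ K' ∧
        ∀ F : Finset G, ↑F ⊆ (K : Set G) → ∀ n,
          ((W F n).support : Set G) ⊆ (K' : Set G) := by
      intro K hK
      have hKset : (K : Set G).Countable := by
        exact Set.countable_coe_iff.1 hK
      set T : Set (Finset G × ℕ) := {p | ↑p.1 ⊆ (K : Set G)} with hT
      have hTc : T.Countable := by
        have e : T = {F : Finset G | ↑F ⊆ (K : Set G)} ×ˢ (Set.univ : Set ℕ) := by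
          ext p; simp [hT]
        rw [e]
        exact (countable_finsets_subset hKset).prod Set.countable_univ
      set S : Set G := ⋃ p ∈ T, ((W p.1 p.2).support : Set G) with hS
      have hSc : S.Countable := hTc.biUnion fun p _ => (W p.1 p.2).support.countable_toSet
      have hclc : ((Subgroup.closure ((K : Set G) ∪ S) : Subgroup G) : Set G).Countable :=
        countable_closure_subgroup (hKset.union hSc)
      obtain ⟨K', hK'𝓗, hle⟩ := h𝓗cof (Subgroup.closure ((K : Set G) ∪ S)) hclc.to_subtype
      refine ⟨K', hK'𝓗, ?_, ?_⟩
      · intro x hx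
        exact hle (Subgroup.subset_closure (Or.inl hx))
      · intro F hF n x hx
        have hxS : x ∈ S := Set.mem_biUnion (show (F, n) ∈ T from hF) hx
        exact hle (Subgroup.subset_closure (Or.inr hxS))
    obtain ⟨c0, hc0𝓗, hc0le⟩ := h𝓗cof Λ₁ hΛ₁c
    let next : {K : Subgroup G // K ∈ 𝓗} → {K : Subgroup G // K ∈ 𝓗} := fun K =>
      ⟨(hnext K.1 (h𝓗count K.1 K.2)).choose, (hnext K.1 (h𝓗count K.1 K.2)).choose_spec.1⟩
    let d : ℕ → {K : Subgroup G // K ∈ 𝓗} := fun n =>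
      Nat.rec ⟨c0, hc0𝓗⟩ (fun _ K => next K) n
    let c : ℕ → Subgroup G := fun n => (d n).1
    have hc𝓗 : ∀ n, c n ∈ 𝓗 := fun n => (d n).2
    have hcle : ∀ n, c n ≤ c (n+1) := fun n =>
      (hnext (c n) (h𝓗count _ (hc𝓗 n))).choose_spec.2.1
    have hcsupp : ∀ n, ∀ F : Finset G, ↑F ⊆ (c n : Set G) → ∀ k,
        ((W F k).support : Set G) ⊆ (c (n+1) : Set G) := fun n =>
      (hnext (c n) (h𝓗count _ (hc𝓗 n))).choose_spec.2.2
    have hmono : Monotone c := monotone_nat_of_le_succ hcle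
    set Λ : Subgroup G := ⨆ n, c n with hΛ
    have hΛ𝓗 : Λ ∈ 𝓗 := h𝓗union c hc𝓗 hmono
    have hΛ₁Λ : Λ₁ ≤ Λ := le_trans hc0le (le_iSup c 0)
    refine ⟨Λ, hΛ𝓗, hΛ₁Λ, ?_⟩
    have key : ∀ F : Finset G, ↑F ⊆ (Λ : Set G) → ∀ k : ℕ, ∃ w : G →₀ ℝ,
        (∀ x, 0 ≤ w x) ∧ ((w.support : Set G) ⊆ (Λ : Set G)) ∧
        ((mapDomain (QuotientGroup.mk : G → G ⧸ Γ) w).sum fun _ a => a) = 1 ∧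
        ∀ g ∈ F, l1 (mapDomain (g • ·) (mapDomain (QuotientGroup.mk : G → G ⧸ Γ) w)
          - mapDomain (QuotientGroup.mk : G → G ⧸ Γ) w) < 1/(k+1) := by
      intro F hF k
      have hx : ∀ x ∈ F, ∃ n, x ∈ c n := by
        intro x hxF
        have hmem := hF hxF
        rwa [hΛ, SetLike.mem_coe, Subgroup.mem_iSup_of_directed hmono.directed_le] at hmem
      choose nx hnx using hx
      set N : ℕ := F.attach.sup (fun x => nx x.1 x.2) with hN
      have hFN : ↑F ⊆ (c N : Set G) := by
        intro x hxF
        exact hmono (Finset.le_sup (Finset.mem_attach F ⟨x, hxF⟩)) (hnx x hxF)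
      refine ⟨W F k, hW1 F k, ?_, hW2 F k, hW3 F k⟩
      refine (hcsupp N F hFN k).trans ?_
      exact SetLike.coe_subset_coe.2 (le_iSup c (N+1))
    set Γ' := Γ.subgroupOf Λ with hΓ'
    let ι : (Λ ⧸ Γ') → (G ⧸ Γ) := Quotient.map' Subtype.val (by
      intro a b hab
      rw [QuotientGroup.leftRel_apply] at hab ⊢
      simpa [hΓ', Subgroup.mem_subgroupOf] using hab)
    have ιmk : ∀ x : Λ, ι (QuotientGroup.mk x) = QuotientGroup.mk (x : G) :=
      fun x => rfl
    have ιinj : Function.Injective ι := by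
      intro q1 q2 h
      obtain ⟨a, rfl⟩ := QuotientGroup.mk_surjective q1
      obtain ⟨b, rfl⟩ := QuotientGroup.mk_surjective q2
      rw [ιmk, ιmk, QuotientGroup.eq] at h
      rw [QuotientGroup.eq]
      simpa [hΓ', Subgroup.mem_subgroupOf] using h
    have ιsmul : ∀ (g : Λ) (q : Λ ⧸ Γ'), ι (g • q) = (g : G) • ι q := by
      intro g q
      obtain ⟨a, rfl⟩ := QuotientGroup.mk_surjective q
      rw [MulAction.Quotient.smul_mk, ιmk, ιmk, MulAction.Quotient.smul_mk]
      rfl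
    have hB : ∀ (F' : Finset Λ) (n : ℕ), ∃ v' : (Λ ⧸ Γ') →₀ ℝ,
        (∀ x, 0 ≤ v' x) ∧ v'.sum (fun _ a => a) = 1 ∧
        ∀ g ∈ F', l1 (mapDomain (g • ·) v' - v') < 1/(n+1) := by
      intro F' n
      set F : Finset G := F'.image Subtype.val with hFdef
      have hFΛ : ↑F ⊆ (Λ : Set G) := by
        intro x hx
        simp only [hFdef, Finset.coe_image, Set.mem_image, Finset.mem_coe] at hx
        obtain ⟨y, -, rfl⟩ := hx
        exact y.2
      obtain ⟨w, hw1, hwsupp, hwsum, hwinv⟩ := key F hFΛ n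
      set w' : Λ →₀ ℝ := Finsupp.subtypeDomain (· ∈ Λ) w with hw'
      have hback : mapDomain (Subtype.val : Λ → G) w' = w := by
        ext x
        by_cases hxΛ : x ∈ Λ
        · have e : x = ((⟨x, hxΛ⟩ : Λ) : G) := rfl
          rw [e, Finsupp.mapDomain_apply Subtype.val_injective]
          rfl
        · rw [Finsupp.mapDomain_notin_range]
          · symm
            rw [← Finsupp.notMem_support_iff]
            intro hmem
            exact hxΛ (hwsupp hmem)
          · rw [Subtype.range_coe_subtype]
            exact hxΛ
      set v' : (Λ ⧸ Γ') →₀ ℝ := mapDomain (QuotientGroup.mk : Λ → Λ ⧸ Γ') w' with hv'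
      have hιv : mapDomain ι v' = mapDomain (QuotientGroup.mk : G → G ⧸ Γ) w := by
        rw [hv', ← Finsupp.mapDomain_comp]
        have e : (ι ∘ (QuotientGroup.mk : Λ → Λ ⧸ Γ')) =
            (QuotientGroup.mk : G → G ⧸ Γ) ∘ (Subtype.val : Λ → G) := by
          funext a; exact ιmk a
        rw [e, Finsupp.mapDomain_comp, hback]
      refine ⟨v', ?_, ?_, ?_⟩
      · have hw'1 : ∀ a : Λ, 0 ≤ w' a := by
          intro a
          rw [hw', Finsupp.subtypeDomain_apply]
          exact hw1 (a : G)
        intro x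
        rw [hv']
        exact CoAux.mapDomain_nonneg hw'1 x
      · rw [hv', sum_mapDomain]
        have h1 : w'.sum (fun _ a => a) = w.sum (fun _ a => a) := by
          rw [← hback, sum_mapDomain]
        rw [h1, ← sum_mapDomain (QuotientGroup.mk : G → G ⧸ Γ) w]
        exact hwsum
      · intro g hg
        have hgF : (g : G) ∈ F := Finset.mem_image_of_mem _ hg
        have e : mapDomain ι (mapDomain (g • ·) v' - v')
            = mapDomain ((g : G) • ·) (mapDomain (QuotientGroup.mk : G → G ⧸ Γ) w)
              - mapDomain (QuotientGroup.mk : G → G ⧸ Γ) w := by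
          rw [CoAux.mapDomain_sub, hιv]
          congr 1
          have hcomp : (ι ∘ (g • ·) : (Λ ⧸ Γ') → G ⧸ Γ) = (((g : G) • ·) ∘ ι) := by
            funext q; exact ιsmul g q
          rw [← Finsupp.mapDomain_comp, hcomp, Finsupp.mapDomain_comp, hιv]
        rw [← l1_mapDomain_inj ιinj, e]
        exact hwinv _ hgF
    obtain ⟨mean, hmean⟩ := mean_of_almost_invariant hB
    exact ⟨mean, hmean⟩
  constructor
  · intro Λ₁ hΛ₁ hΓΛ₁
    obtain ⟨Λ, hΛ𝓗, hle, hco'⟩ := part2 {K : Subgroup G | Countable K}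
      (fun H hH => hH)
      (fun K hK => ⟨K, hK, le_rfl⟩)
      (fun c hc hmono => by
        have h1 : ((⨆ n, c n : Subgroup G) : Set G).Countable := by
          rw [Subgroup.coe_iSup_of_directed hmono.directed_le]
          exact Set.countable_iUnion fun n => Set.countable_coe_iff.2 (hc n)
        exact h1.to_subtype)
      Λ₁ hΛ₁ hΓΛ₁
    exact ⟨Λ, hΛ𝓗, hle, hco'⟩
  · exact part2
end
end
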